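/- arXiv:2102.03498 — 4 statements merged into one kernel-verified Lean document; each statement's English description precedes it below -/
import Mathlib

section
/- Let λ > 1, γ ≥ 0 and θ > 3 + γ. There exists a constant c0 > 0 (depending only on λ, γ, θ) such that for every sequence u = (u_j)_{j≥1} of nonnegative reals with ∑_{j≥1} λ_j^{2γ+θ} u_j³ < ∞, one has ‖u‖_{γ+1} < ∞ and both ∑_{j≥1} λ_j^{2γ+θ} u_j³ ≥ c0 ‖u‖_{γ+1}³ and ∑_{j≥1} λ_j^{2γ+θ+1} u_j³ ≥ c0 ‖u‖_{γ+1}³ (the latter sum being possibly infinite). -/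
open Real MeasureTheory Set
open scoped ENNReal

noncomputable section

/-- Square of the `H^s` norm as an extended nonnegative real: `∑_{j≥1} λ^{2sj} u_j²`. -/
def esum (lam s : ℝ) (u : ℕ → ℝ) : ℝ≥0∞ :=
  ∑' j : ℕ, ENNReal.ofReal (lam ^ (2 * s * ((j : ℝ) + 1)) * (u (j + 1)) ^ 2)

/-- Square of the `H^s` norm, real-valued: `∑_{j≥1} λ^{2sj} u_j²`. -/
def dsum (lam s : ℝ) (u : ℕ → ℝ) : ℝ :=
  ∑' j : ℕ, lam ^ (2 * s * ((j : ℝ) + 1)) * (u (j + 1)) ^ 2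

/-- The `H^s` norm `‖u‖_s = (∑_{j≥1} λ^{2sj} u_j²)^{1/2}`. -/
def dnorm (lam s : ℝ) (u : ℕ → ℝ) : ℝ := Real.sqrt (dsum lam s u)

/-- Flux-type sum `∑_{j≥1} λ^{sj} u_j² v_{j+1}` as an extended nonnegative real. -/
def eflux (lam s : ℝ) (u v : ℕ → ℝ → ℝ) (τ : ℝ) : ℝ≥0∞ :=
  ∑' j : ℕ, ENNReal.ofReal (lam ^ (s * ((j : ℝ) + 1)) * ((u (j + 1) τ) ^ 2 * v (j + 2) τ))

/-- The dyadic (Hall) MHD system: `(a, b)` is a solution on `[0,∞)` with (one-sided)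
derivatives `a'`, `b'`; each `a_j, b_j` is `C¹` on `[0,∞)`, `a_0 ≡ 0 ≡ b_0`,
the ODEs hold for `j ≥ 1`, `t ≥ 0`, and `(a_j(t))_{j≥1}, (b_j(t))_{j≥1} ∈ ℓ²`. -/
structure IsDyadicSol (lam θ ν μ di : ℝ) (a b a' b' : ℕ → ℝ → ℝ) : Prop where
  a_zero : ∀ t : ℝ, a 0 t = 0
  b_zero : ∀ t : ℝ, b 0 t = 0
  a_deriv : ∀ j : ℕ, ∀ t ∈ Ici (0:ℝ), HasDerivWithinAt (a j) (a' j t) (Ici 0) t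
  b_deriv : ∀ j : ℕ, ∀ t ∈ Ici (0:ℝ), HasDerivWithinAt (b j) (b' j t) (Ici 0) t
  a_deriv_cont : ∀ j : ℕ, ContinuousOn (a' j) (Ici 0)
  b_deriv_cont : ∀ j : ℕ, ContinuousOn (b' j) (Ici 0)
  eq_a : ∀ j : ℕ, 1 ≤ j → ∀ t ∈ Ici (0:ℝ),
    a' j t + ν * lam ^ (2 * (j : ℝ)) * a j t =
      -(lam ^ (θ * (j : ℝ)) * a j t * a (j + 1) t
          - lam ^ (θ * ((j : ℝ) - 1)) * (a (j - 1) t) ^ 2)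
        - (lam ^ (θ * (j : ℝ)) * b j t * b (j + 1) t
          - lam ^ (θ * ((j : ℝ) - 1)) * (b (j - 1) t) ^ 2)
  eq_b : ∀ j : ℕ, 1 ≤ j → ∀ t ∈ Ici (0:ℝ),
    b' j t + μ * lam ^ (2 * (j : ℝ)) * b j t =
      lam ^ (θ * (j : ℝ)) * a j t * b (j + 1) t
        - lam ^ (θ * (j : ℝ)) * b j t * a (j + 1) t
        - di * (lam ^ ((θ + 1) * (j : ℝ)) * b j t * b (j + 1) t
          - lam ^ ((θ + 1) * ((j : ℝ) - 1)) * (b (j - 1) t) ^ 2)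
  ell2_a : ∀ t ∈ Ici (0:ℝ), Summable (fun j : ℕ => (a (j + 1) t) ^ 2)
  ell2_b : ∀ t ∈ Ici (0:ℝ), Summable (fun j : ℕ => (b (j + 1) t) ^ 2)

/-- The rescaled dyadic (Hall) MHD system with wavenumbers `Λ_j = Λ^j` and
dissipation exponent `α`. -/
structure IsRescaledSol (Lam α ν μ di : ℝ) (a b a' b' : ℕ → ℝ → ℝ) : Prop where
  a_zero : ∀ t : ℝ, a 0 t = 0
  b_zero : ∀ t : ℝ, b 0 t = 0
  a_deriv : ∀ j : ℕ, ∀ t ∈ Ici (0:ℝ), HasDerivWithinAt (a j) (a' j t) (Ici 0) t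
  b_deriv : ∀ j : ℕ, ∀ t ∈ Ici (0:ℝ), HasDerivWithinAt (b j) (b' j t) (Ici 0) t
  a_deriv_cont : ∀ j : ℕ, ContinuousOn (a' j) (Ici 0)
  b_deriv_cont : ∀ j : ℕ, ContinuousOn (b' j) (Ici 0)
  eq_a : ∀ j : ℕ, 1 ≤ j → ∀ t ∈ Ici (0:ℝ),
    a' j t + ν * Lam ^ (2 * α * (j : ℝ)) * a j t =
      -(Lam ^ (j : ℝ) * a j t * a (j + 1) t) + Lam ^ ((j : ℝ) - 1) * (a (j - 1) t) ^ 2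
        - Lam ^ (j : ℝ) * b j t * b (j + 1) t + Lam ^ ((j : ℝ) - 1) * (b (j - 1) t) ^ 2
  eq_b : ∀ j : ℕ, 1 ≤ j → ∀ t ∈ Ici (0:ℝ),
    b' j t + μ * Lam ^ (2 * α * (j : ℝ)) * b j t =
      Lam ^ (j : ℝ) * a j t * b (j + 1) t - Lam ^ (j : ℝ) * b j t * a (j + 1) t
        - di * (Lam ^ ((α + 1) * (j : ℝ)) * b j t * b (j + 1) t
          - Lam ^ ((α + 1) * ((j : ℝ) - 1)) * (b (j - 1) t) ^ 2)
  ell2_a : ∀ t ∈ Ici (0:ℝ), Summable (fun j : ℕ => (a (j + 1) t) ^ 2)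
  ell2_b : ∀ t ∈ Ici (0:ℝ), Summable (fun j : ℕ => (b (j + 1) t) ^ 2)

/-- A solution is positive when all components `a_j(t), b_j(t)` (for `j ≥ 1`,
`t ≥ 0`) are positive. -/
def PositiveSol (a b : ℕ → ℝ → ℝ) : Prop :=
  ∀ j : ℕ, 1 ≤ j → ∀ t ∈ Ici (0:ℝ), 0 < a j t ∧ 0 < b j t


theorem cube_sum_lower_bound
    (lam γ θ : ℝ) (hlam : 1 < lam) (hγ : 0 ≤ γ) (hθ : 3 + γ < θ) :
    ∃ c0 : ℝ, 0 < c0 ∧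
      ∀ u : ℕ → ℝ, (∀ j : ℕ, 1 ≤ j → 0 ≤ u j) →
        Summable (fun j : ℕ => lam ^ ((2 * γ + θ) * ((j : ℝ) + 1)) * (u (j + 1)) ^ 3) →
        Summable (fun j : ℕ => lam ^ (2 * (γ + 1) * ((j : ℝ) + 1)) * (u (j + 1)) ^ 2) ∧
        c0 * dnorm lam (γ + 1) u ^ 3
          ≤ ∑' j : ℕ, lam ^ ((2 * γ + θ) * ((j : ℝ) + 1)) * (u (j + 1)) ^ 3 ∧
        ENNReal.ofReal (c0 * dnorm lam (γ + 1) u ^ 3)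
          ≤ ∑' j : ℕ,
              ENNReal.ofReal (lam ^ ((2 * γ + θ + 1) * ((j : ℝ) + 1)) * (u (j + 1)) ^ 3) := by
  have hlam0 : (0:ℝ) < lam := lt_trans one_pos hlam
  set ε : ℝ := 2 * (γ + 1) - 2 * (2 * γ + θ) / 3 with hε_def
  have hε : ε < 0 := by rw [hε_def]; linarith
  set r : ℝ := lam ^ ε with hr_def
  have hr0 : 0 < r := Real.rpow_pos_of_pos hlam0 ε
  have hr1 : r < 1 := Real.rpow_lt_one_of_one_lt_of_neg hlam hε
  set C : ℝ := r * (1 - r)⁻¹ with hC_def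
  have hC0 : 0 < C := mul_pos hr0 (inv_pos.2 (by linarith))
  refine ⟨C ^ (-(3/2) : ℝ), Real.rpow_pos_of_pos hC0 _, ?_⟩
  intro u hu hS
  have hu' : ∀ j : ℕ, 0 ≤ u (j + 1) := fun j => hu (j + 1) (Nat.le_add_left 1 j)
  set f : ℕ → ℝ := fun j => lam ^ ((2 * γ + θ) * ((j : ℝ) + 1)) * (u (j + 1)) ^ 3 with hf_def
  have hf0 : ∀ j : ℕ, 0 ≤ f j := fun j =>
    mul_nonneg (Real.rpow_pos_of_pos hlam0 _).le (pow_nonneg (hu' j) 3)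
  set S : ℝ := ∑' j : ℕ, f j with hS_def
  have hS0 : 0 ≤ S := tsum_nonneg hf0
  set S23 : ℝ := S ^ (2/3 : ℝ) with hS23_def
  have hS230 : 0 ≤ S23 := Real.rpow_nonneg hS0 _
  -- key pointwise bound
  have key : ∀ j : ℕ, lam ^ (2 * (γ + 1) * ((j : ℝ) + 1)) * (u (j + 1)) ^ 2
      ≤ S23 * r ^ (j + 1) := by
    intro j
    set k : ℝ := (j : ℝ) + 1 with hk_def
    have hk0 : (0:ℝ) < k := by positivity
    set v : ℝ := lam ^ ((2 * γ + θ) * k / 3) * u (j + 1) with hv_def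
    have hv0 : 0 ≤ v := mul_nonneg (Real.rpow_pos_of_pos hlam0 _).le (hu' j)
    have hv3 : v ^ 3 = f j := by
      rw [hv_def, hf_def, mul_pow, ← Real.rpow_natCast (lam ^ ((2 * γ + θ) * k / 3)) 3,
        ← Real.rpow_mul hlam0.le]
      norm_num
      exact Or.inl (by rw [hk_def])
    have h1 : v ^ 3 ≤ S := by
      rw [hv3]; exact hS.le_tsum j (fun i _ => hf0 i)
    have h2 : v ≤ S ^ (1/3 : ℝ) := by
      have h := Real.rpow_le_rpow (by positivity) h1 (by norm_num : (0:ℝ) ≤ 1/3)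
      rw [← Real.rpow_natCast v 3, ← Real.rpow_mul hv0] at h
      norm_num at h
      exact h
    have h3 : v ^ 2 ≤ S23 := by
      have h5 := pow_le_pow_left₀ hv0 h2 2
      rw [← Real.rpow_natCast (S ^ (1/3 : ℝ)) 2, ← Real.rpow_mul hS0] at h5
      norm_num at h5
      rw [hS23_def]
      exact h5
    have hterm : v ^ 2 * lam ^ (ε * k) = lam ^ (2 * (γ + 1) * k) * (u (j + 1)) ^ 2 := by
      rw [hv_def, mul_pow, ← Real.rpow_natCast (lam ^ ((2 * γ + θ) * k / 3)) 2,
        ← Real.rpow_mul hlam0.le, mul_right_comm, ← Real.rpow_add hlam0]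
      congr 1
      rw [hε_def]; ring
    have hrk : lam ^ (ε * k) = r ^ (j + 1) := by
      rw [hr_def, ← Real.rpow_natCast (lam ^ ε) (j + 1), ← Real.rpow_mul hlam0.le]
      congr 1
      push_cast [hk_def]
      ring
    calc lam ^ (2 * (γ + 1) * k) * (u (j + 1)) ^ 2 = v ^ 2 * lam ^ (ε * k) := hterm.symm
      _ ≤ S23 * lam ^ (ε * k) :=
          mul_le_mul_of_nonneg_right h3 (Real.rpow_pos_of_pos hlam0 _).le
      _ = S23 * r ^ (j + 1) := by rw [hrk]
  have hgeo : Summable (fun j : ℕ => r ^ j) := summable_geometric_of_lt_one hr0.le hr1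
  have hbsum : Summable (fun j : ℕ => S23 * r ^ (j + 1)) := by
    simpa only [pow_succ] using (hgeo.mul_right r).mul_left S23
  have hg0 : ∀ j : ℕ, 0 ≤ lam ^ (2 * (γ + 1) * ((j : ℝ) + 1)) * (u (j + 1)) ^ 2 := fun j =>
    mul_nonneg (Real.rpow_pos_of_pos hlam0 _).le (sq_nonneg _)
  have hgsum : Summable (fun j : ℕ => lam ^ (2 * (γ + 1) * ((j : ℝ) + 1)) * (u (j + 1)) ^ 2) :=
    Summable.of_nonneg_of_le hg0 key hbsum
  have hreal : C ^ (-(3/2) : ℝ) * dnorm lam (γ + 1) u ^ 3 ≤ S := by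
    have hbnd : ∑' j : ℕ, S23 * r ^ (j + 1) = S23 * C := by
      have hcongr : ∀ j : ℕ, S23 * r ^ (j + 1) = S23 * r * r ^ j := fun j => by
        rw [pow_succ]; ring
      rw [tsum_congr hcongr, tsum_mul_left, tsum_geometric_of_lt_one hr0.le hr1, hC_def]
      ring
    have hdsum_le : dsum lam (γ + 1) u ≤ S23 * C := by
      rw [dsum, ← hbnd]
      exact Summable.tsum_le_tsum key hgsum hbsum
    have hd0 : 0 ≤ dsum lam (γ + 1) u := tsum_nonneg hg0
    have hdn : dnorm lam (γ + 1) u ^ 3 = dsum lam (γ + 1) u ^ (3/2 : ℝ) := by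
      rw [dnorm, ← Real.rpow_natCast (Real.sqrt _) 3, Real.sqrt_eq_rpow,
        ← Real.rpow_mul hd0]
      norm_num
    have h4 : dsum lam (γ + 1) u ^ (3/2 : ℝ) ≤ C ^ (3/2 : ℝ) * S := by
      calc dsum lam (γ + 1) u ^ (3/2 : ℝ) ≤ (S23 * C) ^ (3/2 : ℝ) :=
            Real.rpow_le_rpow hd0 hdsum_le (by norm_num)
        _ = C ^ (3/2 : ℝ) * S := by
            rw [Real.mul_rpow hS230 hC0.le, hS23_def, ← Real.rpow_mul hS0,
              (by norm_num : (2/3 : ℝ) * (3/2) = 1), Real.rpow_one, mul_comm]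
    have hcc : C ^ (-(3/2) : ℝ) * (C ^ (3/2 : ℝ) * S) = S := by
      rw [← mul_assoc, ← Real.rpow_add hC0]
      norm_num
    calc C ^ (-(3/2) : ℝ) * dnorm lam (γ + 1) u ^ 3
        ≤ C ^ (-(3/2) : ℝ) * (C ^ (3/2 : ℝ) * S) := by
          rw [hdn]
          exact mul_le_mul_of_nonneg_left h4 (Real.rpow_pos_of_pos hC0 _).le
      _ = S := hcc
  refine ⟨hgsum, hreal, ?_⟩
  calc ENNReal.ofReal (C ^ (-(3/2) : ℝ) * dnorm lam (γ + 1) u ^ 3)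
      ≤ ENNReal.ofReal S := ENNReal.ofReal_le_ofReal hreal
    _ = ∑' j : ℕ, ENNReal.ofReal (f j) := ENNReal.ofReal_tsum_of_nonneg hf0 hS
    _ ≤ ∑' j : ℕ,
          ENNReal.ofReal (lam ^ ((2 * γ + θ + 1) * ((j : ℝ) + 1)) * (u (j + 1)) ^ 3) := by
        refine ENNReal.tsum_le_tsum fun j => ENNReal.ofReal_le_ofReal ?_
        refine mul_le_mul_of_nonneg_right ?_ (pow_nonneg (hu' j) 3)
        refine Real.rpow_le_rpow_of_exponent_le hlam.le ?_
        have hj : (0:ℝ) ≤ (j : ℝ) := Nat.cast_nonneg j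
        nlinarith
end
end

section
/- Let λ ≥ 2, γ > 0, θ > 3 + γ, ν ≥ 0, μ ≥ 0, d_i = 0, and let c1, c2, c3 > 0. Let (a,b) be a positive solution of the dyadic MHD system on [0,∞) with ‖a(0)‖_γ² + ‖b(0)‖_γ² < ∞, and assume that t ↦ ‖a(t)‖_{θ/3+2γ/3}³ + ‖b(t)‖_{θ/3+2γ/3}³ is locally integrable on [0,∞). Then for every t ≥ 0 the quantity L(t) := ‖a(t)‖_γ² + ‖b(t)‖_γ² + c1 ∑_{j≥1} λ_j^{2γ} a_j(t) a_{j+1}(t) + c2 ∑_{j≥1} λ_j^{2γ} b_j(t) a_{j+1}(t) + c3 ∑_{j≥1} λ_j^{2γ} a_j(t) b_j(t) is finite, and the function t ↦ L(t) is continuous on [0,∞). -/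
open Real MeasureTheory Set
open scoped ENNReal

set_option maxHeartbeats 1600000
noncomputable section

/-! ### Auxiliary definitions and lemmas -/

/-- weight `λ^{2γ(k+1)}` -/
def Wt (lam γ : ℝ) (k : ℕ) : ℝ := lam ^ (2 * γ * ((k:ℝ) + 1))

/-- flux control term -/
def psi (lam θ γ : ℝ) (a b : ℕ → ℝ → ℝ) (k : ℕ) (t : ℝ) : ℝ :=
  2 * lam ^ (2*γ*((k:ℝ)+1) + θ*(k:ℝ)) * ((a k t)^2 + (b k t)^2) * a (k+1) t

/-- partial (shell-truncated) energy: shells `N+1, …, N+M` -/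
def QQ (lam γ : ℝ) (a b : ℕ → ℝ → ℝ) (N M : ℕ) (t : ℝ) : ℝ :=
  ∑ k ∈ Finset.range M, Wt lam γ (N+k) * ((a (N+k+1) t)^2 + (b (N+k+1) t)^2)

lemma mul_le_sq_add_sq (x y : ℝ) : x * y ≤ x^2 + y^2 := by
  nlinarith [sq_nonneg (x - y), sq_nonneg (x + y)]

lemma enn_sqrt_sq {y : ℝ} (hy : 0 ≤ y) : (ENNReal.ofReal (y^2)) ^ (1/2:ℝ) = ENNReal.ofReal y := by
  rw [ENNReal.ofReal_rpow_of_nonneg (by positivity) (by norm_num)]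
  congr 1
  rw [show y ^ 2 = y ^ (2:ℝ) by rw [← Real.rpow_natCast y 2]; norm_num,
    ← Real.rpow_mul hy]
  norm_num

lemma enn_mul_half (x : ℝ≥0∞) : x * x ^ (1/2:ℝ) = x ^ (3/2:ℝ) := by
  rcases eq_or_ne x 0 with h | h0
  · simp [h, ENNReal.zero_rpow_of_pos (by norm_num : (0:ℝ) < 1/2),
      ENNReal.zero_rpow_of_pos (by norm_num : (0:ℝ) < 3/2)]
  rcases eq_or_ne x ⊤ with h | ht
  · simp [h, ENNReal.top_rpow_of_pos (by norm_num : (0:ℝ) < 1/2),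
      ENNReal.top_rpow_of_pos (by norm_num : (0:ℝ) < 3/2)]
  · rw [show (3/2:ℝ) = 1 + 1/2 by norm_num, ENNReal.rpow_add _ _ h0 ht, ENNReal.rpow_one]

lemma enn_young (A B : ℝ≥0∞) : B * A ^ (1/2:ℝ) ≤ A ^ (3/2:ℝ) + B ^ (3/2:ℝ) := by
  rcases le_total A B with h | h
  · calc B * A ^ (1/2:ℝ) ≤ B * B ^ (1/2:ℝ) :=
        mul_le_mul_right (ENNReal.rpow_le_rpow h (by norm_num)) _
    _ = B ^ (3/2:ℝ) := enn_mul_half B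
    _ ≤ _ := le_add_self
  · calc B * A ^ (1/2:ℝ) ≤ A * A ^ (1/2:ℝ) := mul_le_mul_left h _
    _ = A ^ (3/2:ℝ) := enn_mul_half A
    _ ≤ _ := le_self_add

section Aux

variable {lam θ γ ν μ : ℝ} {a b a' b' : ℕ → ℝ → ℝ}

lemma psi_nonneg (hlam : 2 ≤ lam)
    (hnn : ∀ j : ℕ, ∀ t ∈ Ici (0:ℝ), 0 ≤ a j t ∧ 0 ≤ b j t)
    (k : ℕ) (t : ℝ) (ht : t ∈ Ici (0:ℝ)) : 0 ≤ psi lam θ γ a b k t := by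
  have hl0 : (0:ℝ) ≤ lam := by linarith
  exact mul_nonneg (mul_nonneg (mul_nonneg (by norm_num) (Real.rpow_nonneg hl0 _))
    (by positivity)) (hnn (k+1) t ht).1

lemma cont_a (hsol : IsDyadicSol lam θ ν μ 0 a b a' b') (j : ℕ) :
    ContinuousOn (a j) (Ici 0) := fun t ht => (hsol.a_deriv j t ht).continuousWithinAt

lemma cont_b (hsol : IsDyadicSol lam θ ν μ 0 a b a' b') (j : ℕ) :
    ContinuousOn (b j) (Ici 0) := fun t ht => (hsol.b_deriv j t ht).continuousWithinAt

lemma psi_contOn (hsol : IsDyadicSol lam θ ν μ 0 a b a' b') (k : ℕ) :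
    ContinuousOn (psi lam θ γ a b k) (Ici 0) := by
  unfold psi
  exact (continuousOn_const.mul (((cont_a hsol k).pow 2).add ((cont_b hsol k).pow 2))).mul
    (cont_a hsol (k+1))

lemma shell (hlam : 2 ≤ lam) (hν : 0 ≤ ν) (hμ : 0 ≤ μ)
    (hsol : IsDyadicSol lam θ ν μ 0 a b a' b') (hpos : PositiveSol a b)
    (k : ℕ) (t : ℝ) (ht : t ∈ Ici (0:ℝ)) :
    Wt lam γ k * (2 * a (k+1) t * a' (k+1) t + 2 * b (k+1) t * b' (k+1) t)
      ≤ psi lam θ γ a b k t := by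
  have hl0 : (0:ℝ) < lam := by linarith
  have ha := hsol.eq_a (k+1) (by omega) t ht
  have hb := hsol.eq_b (k+1) (by omega) t ht
  simp only [Nat.add_sub_cancel, Nat.cast_add, Nat.cast_one, mul_zero, zero_mul,
    sub_zero] at ha hb
  rw [show ((k:ℝ) + 1 - 1) = (k:ℝ) by ring] at ha
  have hW : 0 < Wt lam γ k := Real.rpow_pos_of_pos hl0 _
  have key : Wt lam γ k * (2 * a (k+1) t * a' (k+1) t + 2 * b (k+1) t * b' (k+1) t)
      = -(2 * Wt lam γ k * (ν * lam ^ (2*((k:ℝ)+1)) * (a (k+1) t)^2))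
        - 2 * Wt lam γ k * (μ * lam ^ (2*((k:ℝ)+1)) * (b (k+1) t)^2)
        - 2 * Wt lam γ k * lam ^ (θ*((k:ℝ)+1)) * ((a (k+1) t)^2 + (b (k+1) t)^2) * a (k+1+1) t
        + 2 * Wt lam γ k * lam ^ (θ*(k:ℝ)) * ((a k t)^2 + (b k t)^2) * a (k+1) t := by
    linear_combination (2 * Wt lam γ k * a (k+1) t) * ha + (2 * Wt lam γ k * b (k+1) t) * hb
  have h1 : 0 ≤ 2 * Wt lam γ k * (ν * lam ^ (2*((k:ℝ)+1)) * (a (k+1) t)^2) := by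
    have h0 := Real.rpow_pos_of_pos hl0 (2*((k:ℝ)+1))
    exact mul_nonneg (by linarith : (0:ℝ) ≤ 2 * Wt lam γ k)
      (mul_nonneg (mul_nonneg hν h0.le) (sq_nonneg _))
  have h2 : 0 ≤ 2 * Wt lam γ k * (μ * lam ^ (2*((k:ℝ)+1)) * (b (k+1) t)^2) := by
    have h0 := Real.rpow_pos_of_pos hl0 (2*((k:ℝ)+1))
    exact mul_nonneg (by linarith : (0:ℝ) ≤ 2 * Wt lam γ k)
      (mul_nonneg (mul_nonneg hμ h0.le) (sq_nonneg _))
  have h3 : 0 ≤ 2 * Wt lam γ k * lam ^ (θ*((k:ℝ)+1)) * ((a (k+1) t)^2 + (b (k+1) t)^2)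
      * a (k+1+1) t := by
    have hp := (hpos (k+1+1) (by omega) t ht).1
    have h2 := sq_nonneg (a (k+1) t); have h3 := sq_nonneg (b (k+1) t)
    have := Real.rpow_pos_of_pos hl0 (θ*((k:ℝ)+1))
    exact mul_nonneg (mul_nonneg (mul_nonneg (by linarith : (0:ℝ) ≤ 2 * Wt lam γ k)
      this.le) (by linarith)) hp.le
  have heq : 2 * Wt lam γ k * lam ^ (θ*(k:ℝ)) * ((a k t)^2 + (b k t)^2) * a (k+1) t
      = psi lam θ γ a b k t := by
    unfold psi Wt
    rw [Real.rpow_add hl0]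
    ring
  linarith [key, h1, h2, h3, heq.le]

lemma psi_tsum_le (hlam : 2 ≤ lam) (hγ : 0 < γ) (hθ : 3 + γ < θ)
    (ha0 : ∀ t : ℝ, a 0 t = 0) (hb0 : ∀ t : ℝ, b 0 t = 0)
    (hnn : ∀ j : ℕ, ∀ t ∈ Ici (0:ℝ), 0 ≤ a j t ∧ 0 ≤ b j t)
    (t : ℝ) (ht : t ∈ Ici (0:ℝ)) :
    (∑' k : ℕ, ENNReal.ofReal (psi lam θ γ a b k t))
      ≤ ENNReal.ofReal (4 * lam ^ (2*γ)) *
        ((esum lam (θ/3 + 2*γ/3) (fun j => a j t)) ^ (3/2:ℝ)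
          + (esum lam (θ/3 + 2*γ/3) (fun j => b j t)) ^ (3/2:ℝ)) := by
  have hl0 : (0:ℝ) < lam := by linarith
  have hl1 : (1:ℝ) ≤ lam := by linarith
  set s : ℝ := θ/3 + 2*γ/3 with hs_def
  have hs0 : 0 < s := by rw [hs_def]; linarith
  set A : ℝ≥0∞ := esum lam s (fun j => a j t) with hA
  set B : ℝ≥0∞ := esum lam s (fun j => b j t) with hB
  set c : ℝ≥0∞ := ENNReal.ofReal (2 * lam ^ (2*γ)) with hc
  have hterm : ∀ i : ℕ, ENNReal.ofReal (psi lam θ γ a b (i+1) t)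
      ≤ (ENNReal.ofReal (lam ^ (2*s*((i:ℝ)+1)) * (a (i+1) t)^2)
          + ENNReal.ofReal (lam ^ (2*s*((i:ℝ)+1)) * (b (i+1) t)^2)) * (c * A ^ (1/2:ℝ)) := by
    intro i
    have hXnn : 0 ≤ (a (i+1) t)^2 + (b (i+1) t)^2 := by positivity
    have hynn : 0 ≤ a (i+1+1) t := (hnn _ t ht).1
    have hexp : 2*γ*(((i:ℕ):ℝ)+1+1) + θ*(((i:ℕ):ℝ)+1)
        ≤ (2*γ) + (2*s*((i:ℝ)+1) + s*((i:ℝ)+2)) := by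
      rw [hs_def]; ring_nf; nlinarith [hθ, hγ]
    have hreal : psi lam θ γ a b (i+1) t
        ≤ (2 * lam ^ (2*γ)) * (lam ^ (2*s*((i:ℝ)+1)) * ((a (i+1) t)^2 + (b (i+1) t)^2))
            * (lam ^ (s*((i:ℝ)+2)) * a (i+1+1) t) := by
      unfold psi
      push_cast
      have h1 : lam ^ (2*γ*((i:ℝ)+1+1) + θ*((i:ℝ)+1))
          ≤ lam ^ ((2*γ) + (2*s*((i:ℝ)+1) + s*((i:ℝ)+2))) := by
        apply Real.rpow_le_rpow_of_exponent_le hl1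
        push_cast at hexp; linarith
      have h2 : lam ^ ((2*γ) + (2*s*((i:ℝ)+1) + s*((i:ℝ)+2)))
          = lam ^ (2*γ) * (lam ^ (2*s*((i:ℝ)+1)) * lam ^ (s*((i:ℝ)+2))) := by
        rw [Real.rpow_add hl0, Real.rpow_add hl0]
      have h4 := mul_le_mul_of_nonneg_right
        (mul_le_mul_of_nonneg_right h1 hXnn) hynn
      calc 2 * lam ^ (2*γ*((i:ℝ)+1+1) + θ*((i:ℝ)+1)) * ((a (i+1) t)^2 + (b (i+1) t)^2)
            * a (i+1+1) t
          = 2 * (lam ^ (2*γ*((i:ℝ)+1+1) + θ*((i:ℝ)+1)) * ((a (i+1) t)^2 + (b (i+1) t)^2)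
            * a (i+1+1) t) := by ring
        _ ≤ 2 * (lam ^ ((2*γ) + (2*s*((i:ℝ)+1) + s*((i:ℝ)+2))) * ((a (i+1) t)^2 + (b (i+1) t)^2)
            * a (i+1+1) t) := by linarith
        _ = _ := by rw [h2]; ring
    have hofr : ENNReal.ofReal (psi lam θ γ a b (i+1) t)
        ≤ ENNReal.ofReal (2 * lam ^ (2*γ))
            * (ENNReal.ofReal (lam ^ (2*s*((i:ℝ)+1)) * (a (i+1) t)^2)
              + ENNReal.ofReal (lam ^ (2*s*((i:ℝ)+1)) * (b (i+1) t)^2))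
            * ENNReal.ofReal (lam ^ (s*((i:ℝ)+2)) * a (i+1+1) t) := by
      refine le_trans (ENNReal.ofReal_le_ofReal hreal) ?_
      rw [mul_add, ENNReal.ofReal_mul (by positivity), ENNReal.ofReal_mul (by positivity),
        ENNReal.ofReal_add (by positivity) (by positivity)]
    have hsqrt : ENNReal.ofReal (lam ^ (s*((i:ℝ)+2)) * a (i+1+1) t) ≤ A ^ (1/2:ℝ) := by
      have hz : 0 ≤ lam ^ (s*((i:ℝ)+2)) * a (i+1+1) t := by
        have := (Real.rpow_pos_of_pos hl0 (s*((i:ℝ)+2))).le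
        exact mul_nonneg this hynn
      rw [← enn_sqrt_sq hz]
      apply ENNReal.rpow_le_rpow _ (by norm_num)
      have hsq : (lam ^ (s*((i:ℝ)+2)) * a (i+1+1) t)^2
          = lam ^ (2*s*(((i:ℕ):ℝ)+1+1)) * (a (i+1+1) t)^2 := by
        rw [mul_pow, sq (lam ^ (s*((i:ℝ)+2))), ← Real.rpow_add hl0]
        congr 1
        ring
      rw [hsq, hA]
      unfold esum
      have hle := ENNReal.le_tsum
        (f := fun j : ℕ => ENNReal.ofReal
          (lam ^ (2*s*((j:ℝ)+1)) * ((fun j => a j t) (j+1))^2)) (i+1)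
      refine le_trans (le_of_eq ?_) hle
      norm_num
    calc ENNReal.ofReal (psi lam θ γ a b (i+1) t)
        ≤ ENNReal.ofReal (2 * lam ^ (2*γ))
            * (ENNReal.ofReal (lam ^ (2*s*((i:ℝ)+1)) * (a (i+1) t)^2)
              + ENNReal.ofReal (lam ^ (2*s*((i:ℝ)+1)) * (b (i+1) t)^2))
            * ENNReal.ofReal (lam ^ (s*((i:ℝ)+2)) * a (i+1+1) t) :=
          hofr
      _ ≤ ENNReal.ofReal (2 * lam ^ (2*γ))
            * (ENNReal.ofReal (lam ^ (2*s*((i:ℝ)+1)) * (a (i+1) t)^2)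
              + ENNReal.ofReal (lam ^ (2*s*((i:ℝ)+1)) * (b (i+1) t)^2)) * A ^ (1/2:ℝ) :=
          mul_le_mul_right hsqrt _
      _ = (ENNReal.ofReal (lam ^ (2*s*((i:ℝ)+1)) * (a (i+1) t)^2)
              + ENNReal.ofReal (lam ^ (2*s*((i:ℝ)+1)) * (b (i+1) t)^2)) * (c * A ^ (1/2:ℝ)) := by
          rw [hc]; ring
  have hpsi0 : psi lam θ γ a b 0 t = 0 := by
    unfold psi; rw [ha0 t, hb0 t]; ring
  have hAsum : (∑' i : ℕ, ENNReal.ofReal (lam ^ (2*s*((i:ℝ)+1)) * (a (i+1) t)^2)) = A := by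
    rw [hA]; rfl
  have hBsum : (∑' i : ℕ, ENNReal.ofReal (lam ^ (2*s*((i:ℝ)+1)) * (b (i+1) t)^2)) = B := by
    rw [hB]; rfl
  calc (∑' k : ℕ, ENNReal.ofReal (psi lam θ γ a b k t))
      = ENNReal.ofReal (psi lam θ γ a b 0 t)
          + ∑' i : ℕ, ENNReal.ofReal (psi lam θ γ a b (i+1) t) :=
        tsum_eq_zero_add' ENNReal.summable
    _ = ∑' i : ℕ, ENNReal.ofReal (psi lam θ γ a b (i+1) t) := by
        rw [hpsi0]; simp
    _ ≤ ∑' i : ℕ, (ENNReal.ofReal (lam ^ (2*s*((i:ℝ)+1)) * (a (i+1) t)^2)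
          + ENNReal.ofReal (lam ^ (2*s*((i:ℝ)+1)) * (b (i+1) t)^2)) * (c * A ^ (1/2:ℝ)) :=
        ENNReal.tsum_le_tsum hterm
    _ = (∑' i : ℕ, (ENNReal.ofReal (lam ^ (2*s*((i:ℝ)+1)) * (a (i+1) t)^2)
          + ENNReal.ofReal (lam ^ (2*s*((i:ℝ)+1)) * (b (i+1) t)^2))) * (c * A ^ (1/2:ℝ)) :=
        ENNReal.tsum_mul_right
    _ = (A + B) * (c * A ^ (1/2:ℝ)) := by
        rw [ENNReal.tsum_add, hAsum, hBsum]
    _ = c * (A * A ^ (1/2:ℝ)) + c * (B * A ^ (1/2:ℝ)) := by ring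
    _ ≤ c * (A ^ (3/2:ℝ) + B ^ (3/2:ℝ)) + c * (A ^ (3/2:ℝ) + B ^ (3/2:ℝ)) := by
        refine add_le_add (mul_le_mul_right ?_ _) (mul_le_mul_right (enn_young A B) _)
        rw [enn_mul_half A]; exact le_self_add
    _ = (c + c) * (A ^ (3/2:ℝ) + B ^ (3/2:ℝ)) := by ring
    _ = ENNReal.ofReal (4 * lam ^ (2*γ)) * (A ^ (3/2:ℝ) + B ^ (3/2:ℝ)) := by
        rw [hc, ← ENNReal.ofReal_add (by positivity) (by positivity)]
        ring_nf

lemma psi_aemeas (hsol : IsDyadicSol lam θ ν μ 0 a b a' b') (k : ℕ) (T : ℝ) :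
    AEMeasurable (fun τ => ENNReal.ofReal (psi lam θ γ a b k τ))
      (volume.restrict (Icc (0:ℝ) T)) := by
  refine ENNReal.measurable_ofReal.comp_aemeasurable ?_
  exact ((psi_contOn (γ := γ) hsol k).mono Icc_subset_Ici_self).aemeasurable measurableSet_Icc

lemma QQ_hasDeriv (hsol : IsDyadicSol lam θ ν μ 0 a b a' b') (N M : ℕ)
    (t : ℝ) (ht : t ∈ Ici (0:ℝ)) :
    HasDerivWithinAt (QQ lam γ a b N M)
      (∑ k ∈ Finset.range M, Wt lam γ (N+k)
        * (2 * a (N+k+1) t * a' (N+k+1) t + 2 * b (N+k+1) t * b' (N+k+1) t)) (Ici 0) t := by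
  unfold QQ
  apply HasDerivWithinAt.fun_sum
  intro k _
  have hA := hsol.a_deriv (N+k+1) t ht
  have hB := hsol.b_deriv (N+k+1) t ht
  have := ((hA.fun_pow 2).fun_add (hB.fun_pow 2)).const_mul (Wt lam γ (N+k))
  convert this using 1
  · rfl
  push_cast
  ring

lemma Jfin (hlam : 2 ≤ lam) (hγ : 0 < γ) (hθ : 3 + γ < θ)
    (hsol : IsDyadicSol lam θ ν μ 0 a b a' b')
    (hnn : ∀ j : ℕ, ∀ t ∈ Ici (0:ℝ), 0 ≤ a j t ∧ 0 ≤ b j t)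
    (T : ℝ)
    (hlocT : (∫⁻ t in Icc (0:ℝ) T,
        ((esum lam (θ / 3 + 2 * γ / 3) (fun j => a j t)) ^ (3/2 : ℝ)
          + (esum lam (θ / 3 + 2 * γ / 3) (fun j => b j t)) ^ (3/2 : ℝ))) < ⊤) :
    (∑' k : ℕ, ∫⁻ τ in Icc (0:ℝ) T, ENNReal.ofReal (psi lam θ γ a b k τ)) < ⊤ := by
  rw [← MeasureTheory.lintegral_tsum (fun k => psi_aemeas hsol k T)]
  calc ∫⁻ τ in Icc (0:ℝ) T, ∑' k, ENNReal.ofReal (psi lam θ γ a b k τ)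
      ≤ ∫⁻ τ in Icc (0:ℝ) T, ENNReal.ofReal (4 * lam ^ (2*γ)) *
          ((esum lam (θ/3 + 2*γ/3) (fun j => a j τ)) ^ (3/2:ℝ)
            + (esum lam (θ/3 + 2*γ/3) (fun j => b j τ)) ^ (3/2:ℝ)) := by
        apply lintegral_mono_ae
        filter_upwards [ae_restrict_mem measurableSet_Icc] with τ hτ
        exact psi_tsum_le hlam hγ hθ hsol.a_zero hsol.b_zero hnn τ hτ.1
    _ = ENNReal.ofReal (4 * lam ^ (2*γ)) * ∫⁻ τ in Icc (0:ℝ) T,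
          ((esum lam (θ/3 + 2*γ/3) (fun j => a j τ)) ^ (3/2:ℝ)
            + (esum lam (θ/3 + 2*γ/3) (fun j => b j τ)) ^ (3/2:ℝ)) :=
        lintegral_const_mul' _ _ ENNReal.ofReal_ne_top
    _ < ⊤ := ENNReal.mul_lt_top ENNReal.ofReal_lt_top hlocT

lemma QQ_est (hlam : 2 ≤ lam) (hν : 0 ≤ ν) (hμ : 0 ≤ μ)
    (hsol : IsDyadicSol lam θ ν μ 0 a b a' b') (hpos : PositiveSol a b)
    (hnn : ∀ j : ℕ, ∀ t ∈ Ici (0:ℝ), 0 ≤ a j t ∧ 0 ≤ b j t)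
    (T : ℝ) (N M : ℕ)
    (hJ : (∑' k : ℕ, ∫⁻ τ in Icc (0:ℝ) T, ENNReal.ofReal (psi lam θ γ a b (N+k) τ)) ≠ ⊤)
    (t : ℝ) (ht : t ∈ Icc (0:ℝ) T) :
    QQ lam γ a b N M t ≤ QQ lam γ a b N M 0
      + (∑' k : ℕ, ∫⁻ τ in Icc (0:ℝ) T, ENNReal.ofReal (psi lam θ γ a b (N+k) τ)).toReal := by
  have ht0 : 0 ≤ t := ht.1
  have hl0 : (0:ℝ) < lam := by linarith
  set J := ∑' k : ℕ, ∫⁻ τ in Icc (0:ℝ) T, ENNReal.ofReal (psi lam θ γ a b (N+k) τ) with hJdef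
  rcases eq_or_lt_of_le ht0 with h0 | h0
  · rw [← h0]
    have := ENNReal.toReal_nonneg (a := J)
    linarith
  set D : ℝ → ℝ := fun τ => ∑ k ∈ Finset.range M, Wt lam γ (N+k)
    * (2 * a (N+k+1) τ * a' (N+k+1) τ + 2 * b (N+k+1) τ * b' (N+k+1) τ) with hD
  have hQd : ∀ τ ∈ Ici (0:ℝ), HasDerivWithinAt (QQ lam γ a b N M) (D τ) (Ici 0) τ :=
    fun τ hτ => QQ_hasDeriv hsol N M τ hτ
  have hDcont : ContinuousOn D (Ici 0) := by
    apply continuousOn_finset_sum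
    intro k _
    exact continuousOn_const.mul
      (((continuousOn_const.mul (cont_a hsol _)).mul (hsol.a_deriv_cont _)).add
        ((continuousOn_const.mul (cont_b hsol _)).mul (hsol.b_deriv_cont _)))
  have hQcont : ContinuousOn (QQ lam γ a b N M) (Icc 0 t) :=
    fun τ hτ => ((hQd τ hτ.1).continuousWithinAt).mono Icc_subset_Ici_self
  have hint : IntervalIntegrable D volume 0 t := by
    apply ContinuousOn.intervalIntegrable
    rw [uIcc_of_le ht0]
    exact hDcont.mono Icc_subset_Ici_self
  have hftc : ∫ τ in (0:ℝ)..t, D τ = QQ lam γ a b N M t - QQ lam γ a b N M 0 :=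
    intervalIntegral.integral_eq_sub_of_hasDeriv_right_of_le ht0 hQcont
      (fun x hx => ((hQd x (le_of_lt hx.1)).hasDerivAt (Ici_mem_nhds hx.1)).hasDerivWithinAt)
      hint
  set R : ℝ → ℝ := fun τ => ∑ k ∈ Finset.range M, psi lam θ γ a b (N+k) τ with hR
  have hRcont : ContinuousOn R (Ici 0) :=
    continuousOn_finset_sum _ fun k _ => psi_contOn hsol (N+k)
  have hintR : IntervalIntegrable R volume 0 t := by
    apply ContinuousOn.intervalIntegrable
    rw [uIcc_of_le ht0]
    exact hRcont.mono Icc_subset_Ici_self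
  have hDR : ∀ τ ∈ Icc (0:ℝ) t, D τ ≤ R τ := fun τ hτ =>
    Finset.sum_le_sum fun k _ => shell hlam hν hμ hsol hpos (N+k) τ hτ.1
  have hmono : ∫ τ in (0:ℝ)..t, D τ ≤ ∫ τ in (0:ℝ)..t, R τ :=
    intervalIntegral.integral_mono_on ht0 hint hintR hDR
  have hIoc : ∫ τ in (0:ℝ)..t, R τ = ∫ τ in Ioc (0:ℝ) t, R τ :=
    intervalIntegral.integral_of_le ht0
  have hRnn : ∀ τ ∈ Ioc (0:ℝ) t, 0 ≤ R τ := fun τ hτ =>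
    Finset.sum_nonneg fun k _ => psi_nonneg hlam hnn (N+k) τ (le_of_lt hτ.1)
  have hRint : IntegrableOn R (Ioc 0 t) :=
    ((hRcont.mono Icc_subset_Ici_self).integrableOn_Icc).mono_set Ioc_subset_Icc_self
  have hofr : ENNReal.ofReal (∫ τ in Ioc (0:ℝ) t, R τ)
      = ∫⁻ τ in Ioc (0:ℝ) t, ENNReal.ofReal (R τ) := by
    apply MeasureTheory.ofReal_integral_eq_lintegral_ofReal hRint
    exact (ae_restrict_mem measurableSet_Ioc).mono fun τ hτ => hRnn τ hτ
  have hlint : (∫⁻ τ in Ioc (0:ℝ) t, ENNReal.ofReal (R τ)) ≤ J := by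
    calc (∫⁻ τ in Ioc (0:ℝ) t, ENNReal.ofReal (R τ))
        ≤ ∫⁻ τ in Icc (0:ℝ) T, ENNReal.ofReal (R τ) :=
          lintegral_mono_set fun x hx => ⟨hx.1.le, hx.2.trans ht.2⟩
      _ = ∫⁻ τ in Icc (0:ℝ) T, ∑ k ∈ Finset.range M,
            ENNReal.ofReal (psi lam θ γ a b (N+k) τ) := by
          apply lintegral_congr_ae
          filter_upwards [ae_restrict_mem measurableSet_Icc] with τ hτ
          rw [hR]
          exact ENNReal.ofReal_sum_of_nonneg fun k _ =>
            psi_nonneg hlam hnn (N+k) τ hτ.1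
      _ = ∑ k ∈ Finset.range M, ∫⁻ τ in Icc (0:ℝ) T,
            ENNReal.ofReal (psi lam θ γ a b (N+k) τ) :=
          lintegral_finset_sum' _ fun k _ => psi_aemeas hsol (N+k) T
      _ ≤ J := by rw [hJdef]; exact ENNReal.sum_le_tsum _
  have hRnonneg : 0 ≤ ∫ τ in Ioc (0:ℝ) t, R τ := setIntegral_nonneg measurableSet_Ioc hRnn
  have hfinal : ∫ τ in Ioc (0:ℝ) t, R τ ≤ J.toReal := by
    have h := ENNReal.toReal_mono hJ (hofr ▸ hlint)
    rwa [ENNReal.toReal_ofReal hRnonneg] at h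
  have := hIoc ▸ hmono
  linarith [hftc ▸ this]

end Aux

theorem lyapunov_continuous_MHD
    (lam θ γ ν μ c1 c2 c3 : ℝ) (hlam : 2 ≤ lam) (hγ : 0 < γ) (hθ : 3 + γ < θ)
    (hν : 0 ≤ ν) (hμ : 0 ≤ μ) (hc1 : 0 < c1) (hc2 : 0 < c2) (hc3 : 0 < c3)
    (a b a' b' : ℕ → ℝ → ℝ)
    (hsol : IsDyadicSol lam θ ν μ 0 a b a' b')
    (hpos : PositiveSol a b)
    (hinit : esum lam γ (fun j => a j 0) + esum lam γ (fun j => b j 0) < ⊤)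
    (hloc : ∀ T : ℝ, 0 < T →
      (∫⁻ t in Icc (0:ℝ) T,
          ((esum lam (θ / 3 + 2 * γ / 3) (fun j => a j t)) ^ (3/2 : ℝ)
            + (esum lam (θ / 3 + 2 * γ / 3) (fun j => b j t)) ^ (3/2 : ℝ))) < ⊤) :
    (∀ t ∈ Ici (0:ℝ),
      Summable (fun j : ℕ => lam ^ (2 * γ * ((j : ℝ) + 1)) * (a (j + 1) t) ^ 2) ∧
      Summable (fun j : ℕ => lam ^ (2 * γ * ((j : ℝ) + 1)) * (b (j + 1) t) ^ 2) ∧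
      Summable (fun j : ℕ => lam ^ (2 * γ * ((j : ℝ) + 1)) * (a (j + 1) t * a (j + 2) t)) ∧
      Summable (fun j : ℕ => lam ^ (2 * γ * ((j : ℝ) + 1)) * (b (j + 1) t * a (j + 2) t)) ∧
      Summable (fun j : ℕ => lam ^ (2 * γ * ((j : ℝ) + 1)) * (a (j + 1) t * b (j + 1) t))) ∧
    ContinuousOn (fun t : ℝ =>
      dsum lam γ (fun j => a j t) + dsum lam γ (fun j => b j t)
        + c1 * ∑' j : ℕ, lam ^ (2 * γ * ((j : ℝ) + 1)) * (a (j + 1) t * a (j + 2) t)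
        + c2 * ∑' j : ℕ, lam ^ (2 * γ * ((j : ℝ) + 1)) * (b (j + 1) t * a (j + 2) t)
        + c3 * ∑' j : ℕ, lam ^ (2 * γ * ((j : ℝ) + 1)) * (a (j + 1) t * b (j + 1) t))
      (Ici 0) := by
  classical
  have hl0 : (0:ℝ) < lam := by linarith
  have hl1 : (1:ℝ) ≤ lam := by linarith
  have hnn : ∀ j : ℕ, ∀ t ∈ Ici (0:ℝ), 0 ≤ a j t ∧ 0 ≤ b j t := by
    intro j t ht
    cases j with
    | zero => simp [hsol.a_zero, hsol.b_zero]
    | succ n => exact ⟨(hpos (n+1) (by omega) t ht).1.le, (hpos (n+1) (by omega) t ht).2.le⟩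
  -- shell functions
  set fa : ℕ → ℝ → ℝ := fun k τ => Wt lam γ k * (a (k+1) τ)^2 with hfa_def
  set fb : ℕ → ℝ → ℝ := fun k τ => Wt lam γ k * (b (k+1) τ)^2 with hfb_def
  set fc1 : ℕ → ℝ → ℝ := fun k τ => Wt lam γ k * (a (k+1) τ * a (k+2) τ) with hfc1_def
  set fc2 : ℕ → ℝ → ℝ := fun k τ => Wt lam γ k * (b (k+1) τ * a (k+2) τ) with hfc2_def
  set fc3 : ℕ → ℝ → ℝ := fun k τ => Wt lam γ k * (a (k+1) τ * b (k+1) τ) with hfc3_def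
  have hWpos : ∀ k : ℕ, 0 < Wt lam γ k := fun k => Real.rpow_pos_of_pos hl0 _
  have hWmono : ∀ k : ℕ, Wt lam γ k ≤ Wt lam γ (k+1) := by
    intro k
    apply Real.rpow_le_rpow_of_exponent_le hl1
    push_cast
    nlinarith [hγ.le]
  -- zero-time tail
  set h0f : ℕ → ℝ≥0∞ := fun k => ENNReal.ofReal (Wt lam γ k * (a (k+1) 0)^2)
    + ENNReal.ofReal (Wt lam γ k * (b (k+1) 0)^2) with hh0f
  have h0tot : (∑' k, h0f k) ≠ ⊤ := by
    have h1 : (∑' k, h0f k) = esum lam γ (fun j => a j 0) + esum lam γ (fun j => b j 0) := by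
      rw [hh0f, ENNReal.tsum_add]; rfl
    rw [h1]
    exact hinit.ne
  set gI : ℝ → ℕ → ℝ≥0∞ :=
    fun T k => ∫⁻ τ in Icc (0:ℝ) T, ENNReal.ofReal (psi lam θ γ a b k τ) with hgI
  have tail_le : ∀ (f : ℕ → ℝ≥0∞) (N : ℕ), (∑' k, f (N+k)) ≤ ∑' k, f k :=
    fun f N => ENNReal.tsum_comp_le_tsum_of_injective (add_right_injective N) f
  have hg_ne : ∀ T : ℝ, 0 < T → ∀ N, (∑' k, gI T (N+k)) ≠ ⊤ := by
    intro T hT N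
    exact ((tail_le (gI T) N).trans_lt
      (Jfin hlam hγ hθ hsol hnn T (hloc T hT))).ne
  have h0_ne : ∀ N, (∑' k, h0f (N+k)) ≠ ⊤ :=
    fun N => ((tail_le h0f N).trans_lt (lt_top_iff_ne_top.mpr h0tot)).ne
  -- epsilon
  set ε : ℝ → ℕ → ℝ :=
    fun T N => (∑' k, h0f (N+k)).toReal + (∑' k, gI T (N+k)).toReal with hε
  have hQQ0 : ∀ N M : ℕ, QQ lam γ a b N M 0 ≤ (∑' k, h0f (N+k)).toReal := by
    intro N M
    have hnn0 : ∀ k : ℕ, 0 ≤ Wt lam γ k * ((a (k+1) 0)^2 + (b (k+1) 0)^2) :=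
      fun k => mul_nonneg (hWpos k).le (by positivity)
    have hQnn : 0 ≤ QQ lam γ a b N M 0 := Finset.sum_nonneg fun k _ => hnn0 _
    have hof : ENNReal.ofReal (QQ lam γ a b N M 0) ≤ ∑' k, h0f (N+k) := by
      unfold QQ
      rw [ENNReal.ofReal_sum_of_nonneg (fun k _ => hnn0 _)]
      refine le_trans (Finset.sum_le_sum (fun k _ => ?_)) (ENNReal.sum_le_tsum _)
      rw [hh0f, mul_add, ENNReal.ofReal_add (mul_nonneg (hWpos _).le (sq_nonneg _))
        (mul_nonneg (hWpos _).le (sq_nonneg _))]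
    calc QQ lam γ a b N M 0 = (ENNReal.ofReal (QQ lam γ a b N M 0)).toReal :=
          (ENNReal.toReal_ofReal hQnn).symm
      _ ≤ (∑' k, h0f (N+k)).toReal := ENNReal.toReal_mono (h0_ne N) hof
  have hQb : ∀ T : ℝ, 0 < T → ∀ t ∈ Icc (0:ℝ) T, ∀ N M : ℕ,
      QQ lam γ a b N M t ≤ ε T N := by
    intro T hT t ht N M
    have h1 := QQ_est hlam hν hμ hsol hpos hnn T N M (hg_ne T hT N) t ht
    have h2 := hQQ0 N M
    rw [hε]
    simp only [hgI] at h1 ⊢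
    linarith
  have hεto : ∀ T : ℝ, 0 < T → Filter.Tendsto (fun N => ε T N) Filter.atTop (nhds 0) := by
    intro T hT
    have key : ∀ (f : ℕ → ℝ≥0∞), (∑' k, f k) ≠ ⊤ →
        Filter.Tendsto (fun N => (∑' k, f (N+k)).toReal) Filter.atTop (nhds 0) := by
      intro f hf
      have h1 : (fun N => (∑' k, f (N+k)).toReal) = fun N => (∑' k, f (k+N)).toReal := by
        funext N
        congr 1
        exact tsum_congr fun k => by rw [Nat.add_comm]
      rw [h1]
      have h2 := ENNReal.tendsto_sum_nat_add f hf
      have h3 := (ENNReal.tendsto_toReal (by simp : (0:ℝ≥0∞) ≠ ⊤)).comp h2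
      simpa [Function.comp_def] using h3
    have h0 := key h0f h0tot
    have hg0 := key (gI T) (Jfin hlam hγ hθ hsol hnn T (hloc T hT)).ne
    rw [hε]
    simpa using h0.add hg0
  -- summability at a fixed time
  have hsummAll : ∀ t ∈ Ici (0:ℝ), Summable (fun k => fa k t) ∧ Summable (fun k => fb k t)
      ∧ Summable (fun k => fc1 k t) ∧ Summable (fun k => fc2 k t)
      ∧ Summable (fun k => fc3 k t) := by
    intro t htt
    have hT : (0:ℝ) < t + 1 := by
      have : (0:ℝ) ≤ t := htt
      linarith
    have htT : t ∈ Icc (0:ℝ) (t+1) := ⟨htt, by linarith⟩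
    have hbMa : ∀ M : ℕ, ∑ k ∈ Finset.range M, fa k t ≤ ε (t+1) 0 := by
      intro M
      have h1 := hQb (t+1) hT t htT 0 M
      refine le_trans ?_ h1
      unfold QQ
      apply Finset.sum_le_sum
      intro k _
      simp only [Nat.zero_add, hfa_def]
      nlinarith [hWpos k, sq_nonneg (b (k+1) t), sq_nonneg (a (k+1) t)]
    have hbMb : ∀ M : ℕ, ∑ k ∈ Finset.range M, fb k t ≤ ε (t+1) 0 := by
      intro M
      have h1 := hQb (t+1) hT t htT 0 M
      refine le_trans ?_ h1
      unfold QQ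
      apply Finset.sum_le_sum
      intro k _
      simp only [Nat.zero_add, hfb_def]
      nlinarith [hWpos k, sq_nonneg (b (k+1) t), sq_nonneg (a (k+1) t)]
    have hfa_nn : ∀ k : ℕ, 0 ≤ fa k t := fun k =>
      mul_nonneg (hWpos k).le (sq_nonneg _)
    have hfb_nn : ∀ k : ℕ, 0 ≤ fb k t := fun k =>
      mul_nonneg (hWpos k).le (sq_nonneg _)
    have hSa : Summable (fun k => fa k t) := summable_of_sum_range_le hfa_nn hbMa
    have hSb : Summable (fun k => fb k t) := summable_of_sum_range_le hfb_nn hbMb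
    have hC1le : ∀ k : ℕ, fc1 k t ≤ fa k t + fa (k+1) t := by
      intro k
      simp only [hfa_def, hfc1_def]
      have h1 := hWmono k
      have h2 : Wt lam γ k * (a (k+1) t * a (k+2) t)
          ≤ Wt lam γ k * ((a (k+1) t)^2 + (a (k+2) t)^2) := by
        exact mul_le_mul_of_nonneg_left (mul_le_sq_add_sq _ _) (hWpos k).le
      have h3 : Wt lam γ k * (a (k+2) t)^2 ≤ Wt lam γ (k+1) * (a (k+2) t)^2 :=
        mul_le_mul_of_nonneg_right h1 (sq_nonneg _)
      have : a (k+1+1) t = a (k+2) t := rfl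
      nlinarith [mul_nonneg (hWpos k).le (sq_nonneg (a (k+1) t))]
    have hC2le : ∀ k : ℕ, fc2 k t ≤ fb k t + fa (k+1) t := by
      intro k
      simp only [hfa_def, hfb_def, hfc2_def]
      have h1 := hWmono k
      have h2 : Wt lam γ k * (b (k+1) t * a (k+2) t)
          ≤ Wt lam γ k * ((b (k+1) t)^2 + (a (k+2) t)^2) := by
        exact mul_le_mul_of_nonneg_left (mul_le_sq_add_sq _ _) (hWpos k).le
      have h3 : Wt lam γ k * (a (k+2) t)^2 ≤ Wt lam γ (k+1) * (a (k+2) t)^2 :=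
        mul_le_mul_of_nonneg_right h1 (sq_nonneg _)
      nlinarith [mul_nonneg (hWpos k).le (sq_nonneg (b (k+1) t))]
    have hC3le : ∀ k : ℕ, fc3 k t ≤ fa k t + fb k t := by
      intro k
      simp only [hfa_def, hfb_def, hfc3_def]
      have h2 : Wt lam γ k * (a (k+1) t * b (k+1) t)
          ≤ Wt lam γ k * ((a (k+1) t)^2 + (b (k+1) t)^2) := by
        exact mul_le_mul_of_nonneg_left (mul_le_sq_add_sq _ _) (hWpos k).le
      linarith only [h2, mul_add (Wt lam γ k) ((a (k+1) t)^2) ((b (k+1) t)^2)]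
    have hCnn : ∀ k : ℕ, 0 ≤ fc1 k t := fun k =>
      mul_nonneg (hWpos k).le (mul_nonneg (hnn _ t htt).1 (hnn _ t htt).1)
    have hC2nn : ∀ k : ℕ, 0 ≤ fc2 k t := fun k =>
      mul_nonneg (hWpos k).le (mul_nonneg (hnn _ t htt).2 (hnn _ t htt).1)
    have hC3nn : ∀ k : ℕ, 0 ≤ fc3 k t := fun k =>
      mul_nonneg (hWpos k).le (mul_nonneg (hnn _ t htt).1 (hnn _ t htt).2)
    have hSa1 : Summable (fun k => fa (k+1) t) := (summable_nat_add_iff (f := fun k => fa k t) 1).mpr hSa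
    refine ⟨hSa, hSb, ?_, ?_, ?_⟩
    · exact Summable.of_nonneg_of_le hCnn hC1le (hSa.add hSa1)
    · exact Summable.of_nonneg_of_le hC2nn hC2le (hSb.add hSa1)
    · exact Summable.of_nonneg_of_le hC3nn hC3le (hSa.add hSb)
  constructor
  · intro t htt
    obtain ⟨h1, h2, h3, h4, h5⟩ := hsummAll t htt
    exact ⟨h1, h2, h3, h4, h5⟩
  -- continuity
  have hIccCont : ∀ T : ℝ, 0 < T → ContinuousOn (fun t : ℝ =>
      dsum lam γ (fun j => a j t) + dsum lam γ (fun j => b j t)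
        + c1 * ∑' j : ℕ, lam ^ (2 * γ * ((j : ℝ) + 1)) * (a (j + 1) t * a (j + 2) t)
        + c2 * ∑' j : ℕ, lam ^ (2 * γ * ((j : ℝ) + 1)) * (b (j + 1) t * a (j + 2) t)
        + c3 * ∑' j : ℕ, lam ^ (2 * γ * ((j : ℝ) + 1)) * (a (j + 1) t * b (j + 1) t))
      (Icc 0 T) := by
    intro T hT
    set F : ℝ → ℝ := fun t =>
      dsum lam γ (fun j => a j t) + dsum lam γ (fun j => b j t)
        + c1 * ∑' j : ℕ, lam ^ (2 * γ * ((j : ℝ) + 1)) * (a (j + 1) t * a (j + 2) t)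
        + c2 * ∑' j : ℕ, lam ^ (2 * γ * ((j : ℝ) + 1)) * (b (j + 1) t * a (j + 2) t)
        + c3 * ∑' j : ℕ, lam ^ (2 * γ * ((j : ℝ) + 1)) * (a (j + 1) t * b (j + 1) t)
      with hF
    set FM : ℕ → ℝ → ℝ := fun M τ =>
      (∑ k ∈ Finset.range M, fa k τ) + (∑ k ∈ Finset.range M, fb k τ)
        + c1 * ∑ k ∈ Finset.range M, fc1 k τ
        + c2 * ∑ k ∈ Finset.range M, fc2 k τ
        + c3 * ∑ k ∈ Finset.range M, fc3 k τ with hFM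
    have hFMcont : ∀ M, ContinuousOn (FM M) (Ici 0) := by
      intro M
      rw [hFM]
      apply ContinuousOn.add
      apply ContinuousOn.add
      apply ContinuousOn.add
      apply ContinuousOn.add
      · exact continuousOn_finset_sum _ fun k _ =>
          continuousOn_const.mul ((cont_a hsol (k+1)).pow 2)
      · exact continuousOn_finset_sum _ fun k _ =>
          continuousOn_const.mul ((cont_b hsol (k+1)).pow 2)
      · exact continuousOn_const.mul (continuousOn_finset_sum _ fun k _ =>
          continuousOn_const.mul ((cont_a hsol (k+1)).mul (cont_a hsol (k+2))))
      · exact continuousOn_const.mul (continuousOn_finset_sum _ fun k _ =>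
          continuousOn_const.mul ((cont_b hsol (k+1)).mul (cont_a hsol (k+2))))
      · exact continuousOn_const.mul (continuousOn_finset_sum _ fun k _ =>
          continuousOn_const.mul ((cont_a hsol (k+1)).mul (cont_b hsol (k+1))))
    -- uniform tail bound
    have hdist : ∀ M : ℕ, ∀ t ∈ Icc (0:ℝ) T,
        dist (F t) (FM M t) ≤ (1 + c1 + c2 + c3) * (ε T M + ε T (M+1)) := by
      intro M t ht
      have htt : t ∈ Ici (0:ℝ) := ht.1
      obtain ⟨hSa, hSb, hS1, hS2, hS3⟩ := hsummAll t htt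
      have hSaM : Summable (fun k => fa (k+M) t) := (summable_nat_add_iff (f := fun k => fa k t) M).mpr hSa
      have hSbM : Summable (fun k => fb (k+M) t) := (summable_nat_add_iff (f := fun k => fb k t) M).mpr hSb
      have hS1M : Summable (fun k => fc1 (k+M) t) := (summable_nat_add_iff (f := fun k => fc1 k t) M).mpr hS1
      have hS2M : Summable (fun k => fc2 (k+M) t) := (summable_nat_add_iff (f := fun k => fc2 k t) M).mpr hS2
      have hS3M : Summable (fun k => fc3 (k+M) t) := (summable_nat_add_iff (f := fun k => fc3 k t) M).mpr hS3
      -- tail of the energy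
      have hUT : ∀ N : ℕ, (∑' k, fa (k+N) t) + (∑' k, fb (k+N) t) ≤ ε T N := by
        intro N
        have hSaN : Summable (fun k => fa (k+N) t) := (summable_nat_add_iff (f := fun k => fa k t) N).mpr hSa
        have hSbN : Summable (fun k => fb (k+N) t) := (summable_nat_add_iff (f := fun k => fb k t) N).mpr hSb
        rw [← Summable.tsum_add hSaN hSbN]
        apply Summable.tsum_le_of_sum_range_le (hSaN.add hSbN)
        intro M'
        have : ∑ k ∈ Finset.range M', (fa (k+N) t + fb (k+N) t) = QQ lam γ a b N M' t := by
          unfold QQ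
          apply Finset.sum_congr rfl
          intro k _
          rw [hfa_def, hfb_def]
          simp only
          rw [show k + N = N + k by omega]
          ring
        rw [this]
        exact hQb T hT t ht N M'
      have htailA : dsum lam γ (fun j => a j t)
          = (∑ k ∈ Finset.range M, fa k t) + ∑' k, fa (k+M) t := by
        have h := Summable.sum_add_tsum_nat_add (f := fun k => fa k t) M hSa
        calc dsum lam γ (fun j => a j t) = ∑' k, fa k t := rfl
          _ = _ := h.symm
      have htailB : dsum lam γ (fun j => b j t)
          = (∑ k ∈ Finset.range M, fb k t) + ∑' k, fb (k+M) t := by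
        have h := Summable.sum_add_tsum_nat_add (f := fun k => fb k t) M hSb
        calc dsum lam γ (fun j => b j t) = ∑' k, fb k t := rfl
          _ = _ := h.symm
      have htailC1 : (∑' j : ℕ, lam ^ (2 * γ * ((j : ℝ) + 1)) * (a (j + 1) t * a (j + 2) t))
          = (∑ k ∈ Finset.range M, fc1 k t) + ∑' k, fc1 (k+M) t := by
        have h := Summable.sum_add_tsum_nat_add (f := fun k => fc1 k t) M hS1
        calc (∑' j : ℕ, lam ^ (2 * γ * ((j : ℝ) + 1)) * (a (j + 1) t * a (j + 2) t)) = ∑' k, fc1 k t := rfl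
          _ = _ := h.symm
      have htailC2 : (∑' j : ℕ, lam ^ (2 * γ * ((j : ℝ) + 1)) * (b (j + 1) t * a (j + 2) t))
          = (∑ k ∈ Finset.range M, fc2 k t) + ∑' k, fc2 (k+M) t := by
        have h := Summable.sum_add_tsum_nat_add (f := fun k => fc2 k t) M hS2
        calc (∑' j : ℕ, lam ^ (2 * γ * ((j : ℝ) + 1)) * (b (j + 1) t * a (j + 2) t)) = ∑' k, fc2 k t := rfl
          _ = _ := h.symm
      have htailC3 : (∑' j : ℕ, lam ^ (2 * γ * ((j : ℝ) + 1)) * (a (j + 1) t * b (j + 1) t))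
          = (∑ k ∈ Finset.range M, fc3 k t) + ∑' k, fc3 (k+M) t := by
        have h := Summable.sum_add_tsum_nat_add (f := fun k => fc3 k t) M hS3
        calc (∑' j : ℕ, lam ^ (2 * γ * ((j : ℝ) + 1)) * (a (j + 1) t * b (j + 1) t)) = ∑' k, fc3 k t := rfl
          _ = _ := h.symm
      -- nonnegativity of tails
      have hfa_nn : ∀ k : ℕ, 0 ≤ fa k t := fun k => mul_nonneg (hWpos k).le (sq_nonneg _)
      have hfb_nn : ∀ k : ℕ, 0 ≤ fb k t := fun k => mul_nonneg (hWpos k).le (sq_nonneg _)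
      have h1nn : ∀ k : ℕ, 0 ≤ fc1 k t := fun k =>
        mul_nonneg (hWpos k).le (mul_nonneg (hnn _ t htt).1 (hnn _ t htt).1)
      have h2nn : ∀ k : ℕ, 0 ≤ fc2 k t := fun k =>
        mul_nonneg (hWpos k).le (mul_nonneg (hnn _ t htt).2 (hnn _ t htt).1)
      have h3nn : ∀ k : ℕ, 0 ≤ fc3 k t := fun k =>
        mul_nonneg (hWpos k).le (mul_nonneg (hnn _ t htt).1 (hnn _ t htt).2)
      have htA_nn : 0 ≤ ∑' k, fa (k+M) t := tsum_nonneg fun k => hfa_nn _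
      have htB_nn : 0 ≤ ∑' k, fb (k+M) t := tsum_nonneg fun k => hfb_nn _
      have ht1_nn : 0 ≤ ∑' k, fc1 (k+M) t := tsum_nonneg fun k => h1nn _
      have ht2_nn : 0 ≤ ∑' k, fc2 (k+M) t := tsum_nonneg fun k => h2nn _
      have ht3_nn : 0 ≤ ∑' k, fc3 (k+M) t := tsum_nonneg fun k => h3nn _
      -- bounds on tails
      have hC1le : ∀ k : ℕ, fc1 k t ≤ fa k t + fa (k+1) t := by
        intro k
        simp only [hfa_def, hfc1_def]
        have h1 := hWmono k
        have h2 : Wt lam γ k * (a (k+1) t * a (k+2) t)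
            ≤ Wt lam γ k * ((a (k+1) t)^2 + (a (k+2) t)^2) := by
          exact mul_le_mul_of_nonneg_left (mul_le_sq_add_sq _ _) (hWpos k).le
        have h3 : Wt lam γ k * (a (k+2) t)^2 ≤ Wt lam γ (k+1) * (a (k+2) t)^2 :=
          mul_le_mul_of_nonneg_right h1 (sq_nonneg _)
        rw [show k+1+1 = k+2 from rfl]
        linarith only [h2, h3, mul_add (Wt lam γ k) ((a (k+1) t)^2) ((a (k+2) t)^2)]
      have hC2le : ∀ k : ℕ, fc2 k t ≤ fb k t + fa (k+1) t := by
        intro k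
        simp only [hfa_def, hfb_def, hfc2_def]
        have h1 := hWmono k
        have h2 : Wt lam γ k * (b (k+1) t * a (k+2) t)
            ≤ Wt lam γ k * ((b (k+1) t)^2 + (a (k+2) t)^2) := by
          exact mul_le_mul_of_nonneg_left (mul_le_sq_add_sq _ _) (hWpos k).le
        have h3 : Wt lam γ k * (a (k+2) t)^2 ≤ Wt lam γ (k+1) * (a (k+2) t)^2 :=
          mul_le_mul_of_nonneg_right h1 (sq_nonneg _)
        rw [show k+1+1 = k+2 from rfl]
        linarith only [h2, h3, mul_add (Wt lam γ k) ((b (k+1) t)^2) ((a (k+2) t)^2)]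
      have hC3le : ∀ k : ℕ, fc3 k t ≤ fa k t + fb k t := by
        intro k
        simp only [hfa_def, hfb_def, hfc3_def]
        have h2 : Wt lam γ k * (a (k+1) t * b (k+1) t)
            ≤ Wt lam γ k * ((a (k+1) t)^2 + (b (k+1) t)^2) := by
          exact mul_le_mul_of_nonneg_left (mul_le_sq_add_sq _ _) (hWpos k).le
        linarith only [h2, mul_add (Wt lam γ k) ((a (k+1) t)^2) ((b (k+1) t)^2)]
      have hSaM1 : Summable (fun k => fa (k+(M+1)) t) := (summable_nat_add_iff (f := fun k => fa k t) (M+1)).mpr hSa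
      have hSbM1 : Summable (fun k => fb (k+(M+1)) t) := (summable_nat_add_iff (f := fun k => fb k t) (M+1)).mpr hSb
      have ht1 : (∑' k, fc1 (k+M) t) ≤ ε T M + ε T (M+1) := by
        have hb1 : (∑' k, fc1 (k+M) t) ≤ ∑' k, (fa (k+M) t + fa (k+(M+1)) t) := by
          apply Summable.tsum_le_tsum _ hS1M (hSaM.add hSaM1)
          intro k
          exact hC1le (k+M)
        have hb2 : (∑' k, (fa (k+M) t + fa (k+(M+1)) t))
            = (∑' k, fa (k+M) t) + ∑' k, fa (k+(M+1)) t := Summable.tsum_add hSaM hSaM1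
        have hb3 := hUT M
        have hb4 := hUT (M+1)
        have htB1_nn : 0 ≤ ∑' k, fb (k+(M+1)) t := tsum_nonneg fun k => hfb_nn _
        linarith
      have ht2 : (∑' k, fc2 (k+M) t) ≤ ε T M + ε T (M+1) := by
        have hb1 : (∑' k, fc2 (k+M) t) ≤ ∑' k, (fb (k+M) t + fa (k+(M+1)) t) := by
          apply Summable.tsum_le_tsum _ hS2M (hSbM.add hSaM1)
          intro k
          exact hC2le (k+M)
        have hb2 : (∑' k, (fb (k+M) t + fa (k+(M+1)) t))
            = (∑' k, fb (k+M) t) + ∑' k, fa (k+(M+1)) t := Summable.tsum_add hSbM hSaM1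
        have hb3 := hUT M
        have hb4 := hUT (M+1)
        have htB1_nn : 0 ≤ ∑' k, fb (k+(M+1)) t := tsum_nonneg fun k => hfb_nn _
        linarith
      have ht3 : (∑' k, fc3 (k+M) t) ≤ ε T M := by
        have hb1 : (∑' k, fc3 (k+M) t) ≤ ∑' k, (fa (k+M) t + fb (k+M) t) := by
          apply Summable.tsum_le_tsum _ hS3M (hSaM.add hSbM)
          intro k
          exact hC3le (k+M)
        have hb2 : (∑' k, (fa (k+M) t + fb (k+M) t))
            = (∑' k, fa (k+M) t) + ∑' k, fb (k+M) t := Summable.tsum_add hSaM hSbM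
        linarith [hUT M]
      have hεnnM : 0 ≤ ε T M := by
        rw [hε]
        positivity
      have hεnnM1 : 0 ≤ ε T (M+1) := by
        rw [hε]
        positivity
      have hdiff : F t - FM M t = (∑' k, fa (k+M) t) + (∑' k, fb (k+M) t)
          + c1 * (∑' k, fc1 (k+M) t) + c2 * (∑' k, fc2 (k+M) t)
          + c3 * (∑' k, fc3 (k+M) t) := by
        rw [hF, hFM]
        simp only
        rw [htailA, htailB, htailC1, htailC2, htailC3]
        ring
      rw [Real.dist_eq]
      have hAB := hUT M
      have habs : |F t - FM M t| = F t - FM M t := by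
        apply abs_of_nonneg
        rw [hdiff]
        have p1 := mul_nonneg hc1.le ht1_nn
        have p2 := mul_nonneg hc2.le ht2_nn
        have p3 := mul_nonneg hc3.le ht3_nn
        linarith only [p1, p2, p3, htA_nn, htB_nn]
      rw [habs, hdiff]
      have e1 : c1 * (∑' k, fc1 (k+M) t) ≤ c1 * (ε T M + ε T (M+1)) :=
        mul_le_mul_of_nonneg_left ht1 hc1.le
      have e2 : c2 * (∑' k, fc2 (k+M) t) ≤ c2 * (ε T M + ε T (M+1)) :=
        mul_le_mul_of_nonneg_left ht2 hc2.le
      have e3 : c3 * (∑' k, fc3 (k+M) t) ≤ c3 * (ε T M + ε T (M+1)) := by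
        refine mul_le_mul_of_nonneg_left (ht3.trans ?_) hc3.le
        linarith only [hεnnM1]
      linarith only [hAB, e1, e2, e3, hεnnM, hεnnM1]
    -- uniform convergence
    have hεsum : Filter.Tendsto (fun M => (1 + c1 + c2 + c3) * (ε T M + ε T (M+1)))
        Filter.atTop (nhds 0) := by
      have h1 := hεto T hT
      have h2 : Filter.Tendsto (fun M : ℕ => ε T (M+1)) Filter.atTop (nhds 0) :=
        h1.comp (Filter.tendsto_add_atTop_nat 1)
      have h3 := (h1.add h2).const_mul (1 + c1 + c2 + c3)
      simpa using h3
    have hunif : TendstoUniformlyOn FM F Filter.atTop (Icc 0 T) := by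
      rw [Metric.tendstoUniformlyOn_iff]
      intro δ hδ
      have := (hεsum.eventually (eventually_lt_nhds hδ))
      filter_upwards [this] with M hM t ht
      calc dist (F t) (FM M t) ≤ (1 + c1 + c2 + c3) * (ε T M + ε T (M+1)) := hdist M t ht
        _ < δ := by simpa using hM
    have hFcont : ContinuousOn F (Icc 0 T) :=
      hunif.continuousOn (Filter.Eventually.of_forall fun M =>
        (hFMcont M).mono Icc_subset_Ici_self).frequently
    exact hFcont
  -- glue
  intro t₀ ht₀
  have ht0 : (0:ℝ) ≤ t₀ := ht₀
  have hc := hIccCont (t₀+1) (by linarith) t₀ ⟨ht0, by linarith⟩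
  refine hc.mono_of_mem_nhdsWithin (mem_nhdsWithin.mpr ⟨Iio (t₀+1), isOpen_Iio, mem_Iio.mpr (by linarith), ?_⟩)
  exact fun x hx => ⟨hx.2, le_of_lt hx.1⟩
end
end

section
/- Let λ ≥ 2, θ > 3 and 0 < γ < θ − 3. Then there exist constants c1 > 0, c2 > 0 with c1 = c2, c3 > 0 and c4 > 0 satisfying the six inequalities: (1) c1(1 − (1/2)λ^{−(2γ+θ)/2} − (1/4)λ^{−4γ−θ} − (1/3)λ^{−2γ}) − c2((1/2)λ^{−(2γ+θ)/2} + (1/4)λ^{−4γ−θ}) ≥ c4; (2) c2(1 − (1/4)λ^{−4γ−θ}) − (2/3)c1 λ^{−2γ} ≥ c4; (3) c1(1 − (1/2)λ^{−(2γ+θ)/2}) ≥ 0; (4) 2(λ^{2γ} − 1) − c1((1/2)λ^{−(2γ+θ)/2} + (1/2)λ^θ + (1/4)λ^{−2γ}) − (1/4)c2 λ^{−2γ} − c3 ≥ 0; (5) 2(λ^{2γ} − 1) − (1/2)c1 λ^{−(2γ+θ)/2} − (1/2)c2(λ^{−(2γ+θ)/2} + λ^θ) − c3 ≥ 0; (6)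 c3(λ^{2γ} − 1) − c2((1/2)λ^θ + (1/4)λ^{−2γ}) ≥ 0. -/
open Real MeasureTheory Set
open scoped ENNReal

noncomputable section

set_option maxHeartbeats 2000000 in
theorem exists_parameters_MHD
    (lam θ γ : ℝ) (hlam : 2 ≤ lam) (hθ : 3 < θ) (hγ0 : 0 < γ) (hγ : γ < θ - 3) :
    ∃ c1 c2 c3 c4 : ℝ, 0 < c1 ∧ 0 < c2 ∧ c1 = c2 ∧ 0 < c3 ∧ 0 < c4 ∧
      c1 * (1 - 1/2 * lam ^ (-(2 * γ + θ) / 2) - 1/4 * lam ^ (-(4 * γ + θ))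
            - 1/3 * lam ^ (-(2 * γ)))
          - c2 * (1/2 * lam ^ (-(2 * γ + θ) / 2) + 1/4 * lam ^ (-(4 * γ + θ))) ≥ c4 ∧
      c2 * (1 - 1/4 * lam ^ (-(4 * γ + θ))) - 2/3 * c1 * lam ^ (-(2 * γ)) ≥ c4 ∧
      c1 * (1 - 1/2 * lam ^ (-(2 * γ + θ) / 2)) ≥ 0 ∧
      2 * (lam ^ (2 * γ) - 1)
          - c1 * (1/2 * lam ^ (-(2 * γ + θ) / 2) + 1/2 * lam ^ θ + 1/4 * lam ^ (-(2 * γ)))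
          - 1/4 * c2 * lam ^ (-(2 * γ)) - c3 ≥ 0 ∧
      2 * (lam ^ (2 * γ) - 1) - 1/2 * c1 * lam ^ (-(2 * γ + θ) / 2)
          - 1/2 * c2 * (lam ^ (-(2 * γ + θ) / 2) + lam ^ θ) - c3 ≥ 0 ∧
      c3 * (lam ^ (2 * γ) - 1) - c2 * (1/2 * lam ^ θ + 1/4 * lam ^ (-(2 * γ))) ≥ 0 := by
  have hlam0 : (0:ℝ) < lam := by linarith
  have hlam1 : (1:ℝ) ≤ lam := by linarith
  set x := lam ^ (-(2 * γ + θ) / 2) with hxdef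
  set y := lam ^ (-(4 * γ + θ)) with hydef
  set z := lam ^ (-(2 * γ)) with hzdef
  set T := lam ^ θ with hTdef
  have hx0 : 0 < x := Real.rpow_pos_of_pos hlam0 _
  have hy0 : 0 < y := Real.rpow_pos_of_pos hlam0 _
  have hz0 : 0 < z := Real.rpow_pos_of_pos hlam0 _
  have hT0 : 0 < T := Real.rpow_pos_of_pos hlam0 _
  have hinv : lam * lam⁻¹ = 1 := mul_inv_cancel₀ hlam0.ne'
  have hinv2 : lam⁻¹ ≤ 1/2 := by nlinarith [hinv]
  have hx : x ≤ 1/2 := by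
    have h1 : x ≤ lam ^ (-1:ℝ) :=
      Real.rpow_le_rpow_of_exponent_le hlam1 (by linarith)
    rw [Real.rpow_neg_one] at h1
    linarith
  have hy : y ≤ 1/8 := by
    have h1 : y ≤ lam ^ (-(3:ℝ)) :=
      Real.rpow_le_rpow_of_exponent_le hlam1 (by linarith)
    have h2 : lam ^ (-(3:ℝ)) = (lam ^ (3:ℕ))⁻¹ := by
      rw [Real.rpow_neg hlam0.le, ← Real.rpow_natCast lam 3]
      norm_num
    have h3 : (8:ℝ) ≤ lam ^ (3:ℕ) := by
      calc (8:ℝ) = 2 ^ (3:ℕ) := by norm_num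
        _ ≤ lam ^ (3:ℕ) := pow_le_pow_left₀ (by norm_num) hlam 3
    have h4 : (lam ^ (3:ℕ))⁻¹ ≤ 1/8 := by
      rw [inv_le_comm₀ (by positivity) (by norm_num)]
      linarith
    rw [h2] at h1
    linarith
  have hz : z ≤ 1 := Real.rpow_le_one_of_one_le_of_nonpos hlam1 (by linarith)
  have hA : 0 < lam ^ (2 * γ) - 1 := by
    have : 1 < lam ^ (2 * γ) :=
      Real.one_lt_rpow_iff_of_pos hlam0 |>.mpr (Or.inl ⟨by linarith, by linarith⟩)
    linarith
  set A := lam ^ (2 * γ) - 1 with hAdef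
  set B := 1 + T with hBdef
  have hB0 : (0:ℝ) < B := by rw [hBdef]; linarith
  have hB1 : (1:ℝ) ≤ B := by rw [hBdef]; linarith
  set m := min A 1 with hmdef
  have hm0 : 0 < m := lt_min hA one_pos
  have hmA : m ≤ A := min_le_left _ _
  have hm1 : m ≤ 1 := min_le_right _ _
  set c := m * A / B with hcdef
  have hc0 : 0 < c := by positivity
  have hcB : c * B = m * A := by
    rw [hcdef]; field_simp
  have hcB' : c + c * T = m * A := by
    rw [← hcB, hBdef]; ring
  have hmAA : m * A ≤ A := mul_le_of_le_one_left hA.le hm1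
  have hmAA2 : m * A ≤ A * A := mul_le_mul_of_nonneg_right hmA hA.le
  have hcB1 : c ≤ c * B := le_mul_of_one_le_right hc0.le hB1
  have hcA : c ≤ A := by linarith
  have hcx : c * x ≤ c * (1/2) := mul_le_mul_of_nonneg_left hx hc0.le
  have hcy : c * y ≤ c * (1/8) := mul_le_mul_of_nonneg_left hy hc0.le
  have hcz : c * z ≤ c * 1 := mul_le_mul_of_nonneg_left hz hc0.le
  clear_value x y z T A B m c
  refine ⟨c, c, A, 5/48 * c, hc0, hc0, rfl, hA, by positivity, ?_, ?_, ?_, ?_, ?_, ?_⟩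
  · nlinarith [hcx, hcy, hcz]
  · nlinarith [hcy, hcz]
  · nlinarith [hcx]
  · nlinarith [hcx, hcz, hcB', hmAA, hcA]
  · nlinarith [hcx, hcB', hmAA, hcA]
  · nlinarith [hcz, hcB', hmAA2, hcA, hA]
end
end

section
/- Let λ > 1, γ > 0, θ > 3 + γ, ν ≥ 0, μ ≥ 0 and d_i > 0. Let (a,b) be a positive solution of the dyadic Hall MHD system on [0,∞) with ‖a(0)‖_γ² + ‖b(0)‖_γ² < ∞, and assume t ↦ ‖a(t)‖_{θ/3+2γ/3}³ + ‖b(t)‖_{(θ+1)/3+2γ/3}³ is locally integrable on [0,∞). Then the functions τ ↦ ‖a(τ)‖_{γ+1}², τ ↦ ‖b(τ)‖_{γ+1}², τ ↦ ∑_{j≥1} λ_j^{2γ+θ} a_j(τ)² a_{j+1}(τ), τ ↦ ∑_{j≥1} λ_j^{2γ+θ} b_j(τ)² a_{j+1}(τ) and τ ↦ ∑_{j≥1} λ_j^{2γ+θ+1} b_j(τ)² b_{j+1}(τ) are locally integrable on [0,∞), ‖a(t)‖_γ² + ‖b(t)‖_γ² is finite for every t ≥ 0, and for every t ≥ 0: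 ‖a(t)‖_γ² + ‖b(t)‖_γ² − (‖a(0)‖_γ² + ‖b(0)‖_γ²) = −2∫₀ᵗ (ν‖a(τ)‖_{γ+1}² + μ‖b(τ)‖_{γ+1}²) dτ + 2(λ^{2γ} − 1)∫₀ᵗ ∑_{j≥1} λ_j^{2γ+θ} a_j(τ)² a_{j+1}(τ) dτ + 2 d_i (λ^{2γ} − 1)∫₀ᵗ ∑_{j≥1} λ_j^{2γ+θ+1} b_j(τ)² b_{j+1}(τ) dτ + 2(λ^{2γ} − 1)∫₀ᵗ ∑_{j≥1} λ_j^{2γ+θ} b_j(τ)² a_{j+1}(τ) dτ. -/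
open Real MeasureTheory Set
open scoped ENNReal

noncomputable section

lemma tele_sum (S : ℕ → ℝ) (h0 : S 0 = 0) (c : ℝ) (N : ℕ) :
    ∑ j ∈ Finset.range N, (c * S j - S (j+1))
      = (c-1) * ∑ j ∈ Finset.range (N-1), S (j+1) - S N := by
  induction N with
  | zero => simp [h0]
  | succ N ih =>
    rw [Finset.sum_range_succ, ih, Nat.succ_sub_one]
    rcases Nat.eq_zero_or_pos N with hN | hN
    · subst hN; simp [h0]
    · obtain ⟨M, rfl⟩ := Nat.exists_eq_add_of_le hN
      rw [show Nat.succ 0 + M - 1 = M from by omega,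
        show Nat.succ 0 + M = M + 1 from by omega,
        Finset.sum_range_succ (fun j => S (j+1)) M]
      ring

def St (lam γ e : ℝ) (u v : ℕ → ℝ → ℝ) (j : ℕ) (τ : ℝ) : ℝ :=
  lam ^ (2*γ*(j:ℝ)) * lam ^ (e*(j:ℝ)) * (u j τ)^2 * v (j+1) τ

lemma sum_deriv_eq (lam θ γ ν μ di : ℝ) (hlam : 0 < lam)
    (a b a' b' : ℕ → ℝ → ℝ) (hsol : IsDyadicSol lam θ ν μ di a b a' b')
    (τ : ℝ) (hτ : τ ∈ Ici (0:ℝ)) (N : ℕ) :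
    ∑ j ∈ Finset.range N,
        (2 * lam ^ (2*γ*((j:ℝ)+1)) * (a (j+1) τ * a' (j+1) τ + b (j+1) τ * b' (j+1) τ))
      = -(∑ j ∈ Finset.range N,
            (2*ν*(lam^(2*γ*((j:ℝ)+1))*lam^(2*((j:ℝ)+1)))*(a (j+1) τ)^2
              + 2*μ*(lam^(2*γ*((j:ℝ)+1))*lam^(2*((j:ℝ)+1)))*(b (j+1) τ)^2))
        + ((lam^(2*γ)-1) * ∑ j ∈ Finset.range (N-1),
              (2*St lam γ θ a a (j+1) τ + 2*St lam γ θ b a (j+1) τ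
                + 2*di*St lam γ (θ+1) b b (j+1) τ)
          - (2*St lam γ θ a a N τ + 2*St lam γ θ b a N τ + 2*di*St lam γ (θ+1) b b N τ)) := by
  set c : ℝ := lam ^ (2*γ) with hc
  have key : ∀ j : ℕ,
      2 * lam ^ (2*γ*((j:ℝ)+1)) * (a (j+1) τ * a' (j+1) τ + b (j+1) τ * b' (j+1) τ)
        = -(2*ν*(lam^(2*γ*((j:ℝ)+1))*lam^(2*((j:ℝ)+1)))*(a (j+1) τ)^2
              + 2*μ*(lam^(2*γ*((j:ℝ)+1))*lam^(2*((j:ℝ)+1)))*(b (j+1) τ)^2)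
          + (2*(c * St lam γ θ a a j τ - St lam γ θ a a (j+1) τ)
            + 2*(c * St lam γ θ b a j τ - St lam γ θ b a (j+1) τ)
            + 2*di*(c * St lam γ (θ+1) b b j τ - St lam γ (θ+1) b b (j+1) τ)) := by
    intro j
    have Ea := hsol.eq_a (j+1) (Nat.le_add_left 1 j) τ hτ
    have Eb := hsol.eq_b (j+1) (Nat.le_add_left 1 j) τ hτ
    simp only [Nat.add_sub_cancel, Nat.cast_add, Nat.cast_one] at Ea Eb
    rw [show ((j:ℝ)+1)-1 = (j:ℝ) from by ring] at Ea Eb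
    simp only [St, Nat.cast_add, Nat.cast_one, hc]
    rw [show 2*γ*((j:ℝ)+1) = 2*γ + 2*γ*(j:ℝ) from by ring, Real.rpow_add hlam,
      show θ*((j:ℝ)+1) = θ*(j:ℝ) + θ from by ring, Real.rpow_add hlam,
      show (θ+1)*((j:ℝ)+1) = (θ+1)*(j:ℝ) + (θ+1) from by ring, Real.rpow_add hlam]
    rw [show θ*((j:ℝ)+1) = θ*(j:ℝ) + θ from by ring, Real.rpow_add hlam] at Ea Eb
    rw [show (θ+1)*((j:ℝ)+1) = (θ+1)*(j:ℝ) + (θ+1) from by ring, Real.rpow_add hlam] at Eb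
    linear_combination (2*(lam^(2*γ)*lam^(2*γ*(j:ℝ)))*(a (j+1) τ)) * Ea
      + (2*(lam^(2*γ)*lam^(2*γ*(j:ℝ)))*(b (j+1) τ)) * Eb
  calc ∑ j ∈ Finset.range N,
        (2 * lam ^ (2*γ*((j:ℝ)+1)) * (a (j+1) τ * a' (j+1) τ + b (j+1) τ * b' (j+1) τ))
      = ∑ j ∈ Finset.range N,
          (-(2*ν*(lam^(2*γ*((j:ℝ)+1))*lam^(2*((j:ℝ)+1)))*(a (j+1) τ)^2
              + 2*μ*(lam^(2*γ*((j:ℝ)+1))*lam^(2*((j:ℝ)+1)))*(b (j+1) τ)^2)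
          + (2*(c * St lam γ θ a a j τ - St lam γ θ a a (j+1) τ)
            + 2*(c * St lam γ θ b a j τ - St lam γ θ b a (j+1) τ)
            + 2*di*(c * St lam γ (θ+1) b b j τ - St lam γ (θ+1) b b (j+1) τ))) :=
        Finset.sum_congr rfl (fun j _ => key j)
    _ = _ := by
        have hsplit : (lam^(2*γ)-1) * ∑ j ∈ Finset.range (N-1),
              (2*St lam γ θ a a (j+1) τ + 2*St lam γ θ b a (j+1) τ
                + 2*di*St lam γ (θ+1) b b (j+1) τ)
            = 2*((c-1) * ∑ j ∈ Finset.range (N-1), St lam γ θ a a (j+1) τ)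
              + 2*((c-1) * ∑ j ∈ Finset.range (N-1), St lam γ θ b a (j+1) τ)
              + 2*di*((c-1) * ∑ j ∈ Finset.range (N-1), St lam γ (θ+1) b b (j+1) τ) := by
          rw [Finset.sum_add_distrib, Finset.sum_add_distrib,
            ← Finset.mul_sum, ← Finset.mul_sum, ← Finset.mul_sum, ← hc]
          ring
        rw [Finset.sum_add_distrib]
        congr 1
        · rw [Finset.sum_neg_distrib]
        rw [Finset.sum_add_distrib, Finset.sum_add_distrib,
          ← Finset.mul_sum, ← Finset.mul_sum, ← Finset.mul_sum,
          tele_sum _ (by simp [St, hsol.a_zero]) c N,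
          tele_sum _ (by simp [St, hsol.b_zero]) c N,
          tele_sum _ (by simp [St, hsol.b_zero]) c N, hsplit]
        ring

def EE (lam γ : ℝ) (a b : ℕ → ℝ → ℝ) (N : ℕ) (τ : ℝ) : ℝ :=
  ∑ j ∈ Finset.range N, lam ^ (2*γ*((j:ℝ)+1)) * ((a (j+1) τ)^2 + (b (j+1) τ)^2)

def DD (lam γ ν μ : ℝ) (a b : ℕ → ℝ → ℝ) (N : ℕ) (τ : ℝ) : ℝ :=
  ∑ j ∈ Finset.range N,
    (2*ν*(lam^(2*γ*((j:ℝ)+1))*lam^(2*((j:ℝ)+1)))*(a (j+1) τ)^2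
      + 2*μ*(lam^(2*γ*((j:ℝ)+1))*lam^(2*((j:ℝ)+1)))*(b (j+1) τ)^2)

def FF (lam γ θ di : ℝ) (a b : ℕ → ℝ → ℝ) (M : ℕ) (τ : ℝ) : ℝ :=
  (lam^(2*γ)-1) * ∑ j ∈ Finset.range M,
    (2*St lam γ θ a a (j+1) τ + 2*St lam γ θ b a (j+1) τ + 2*di*St lam γ (θ+1) b b (j+1) τ)

def BB (lam γ θ di : ℝ) (a b : ℕ → ℝ → ℝ) (N : ℕ) (τ : ℝ) : ℝ :=
  2*St lam γ θ a a N τ + 2*St lam γ θ b a N τ + 2*di*St lam γ (θ+1) b b N τ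

lemma contSt {lam γ e : ℝ} {u v : ℕ → ℝ → ℝ} {k : ℕ}
    (hu : ContinuousOn (u k) (Ici 0)) (hv : ContinuousOn (v (k+1)) (Ici 0)) :
    ContinuousOn (fun τ => St lam γ e u v k τ) (Ici (0:ℝ)) := by
  simp only [St]
  exact (continuousOn_const.mul (hu.pow 2)).mul hv

section sol
variable {lam θ γ ν μ di : ℝ} {a b a' b' : ℕ → ℝ → ℝ}
  (hsol : IsDyadicSol lam θ ν μ di a b a' b')
include hsol

lemma cont_a_s15 (j : ℕ) : ContinuousOn (a j) (Ici 0) :=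
  fun t ht => (hsol.a_deriv j t ht).continuousWithinAt

lemma cont_b_s15 (j : ℕ) : ContinuousOn (b j) (Ici 0) :=
  fun t ht => (hsol.b_deriv j t ht).continuousWithinAt

lemma contEE (N : ℕ) : ContinuousOn (EE lam γ a b N) (Ici 0) := by
  apply continuousOn_finset_sum
  intro j _
  exact continuousOn_const.mul (((cont_a_s15 hsol (j+1)).pow 2).add ((cont_b_s15 hsol (j+1)).pow 2))

lemma contDD (N : ℕ) : ContinuousOn (DD lam γ ν μ a b N) (Ici 0) := by
  apply continuousOn_finset_sum
  intro j _
  exact (continuousOn_const.mul ((cont_a_s15 hsol (j+1)).pow 2)).add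
    (continuousOn_const.mul ((cont_b_s15 hsol (j+1)).pow 2))

lemma contFF (M : ℕ) : ContinuousOn (FF lam γ θ di a b M) (Ici 0) := by
  apply ContinuousOn.mul continuousOn_const
  apply continuousOn_finset_sum
  intro j _
  exact ((continuousOn_const.mul (contSt (cont_a_s15 hsol (j+1)) (cont_a_s15 hsol (j+2)))).add
    (continuousOn_const.mul (contSt (cont_b_s15 hsol (j+1)) (cont_a_s15 hsol (j+2))))).add
    (continuousOn_const.mul (contSt (cont_b_s15 hsol (j+1)) (cont_b_s15 hsol (j+2))))

lemma contBB (N : ℕ) : ContinuousOn (BB lam γ θ di a b N) (Ici 0) := by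
  refine ContinuousOn.add (ContinuousOn.add ?_ ?_) ?_
  · exact continuousOn_const.mul (contSt (cont_a_s15 hsol N) (cont_a_s15 hsol (N+1)))
  · exact continuousOn_const.mul (contSt (cont_b_s15 hsol N) (cont_a_s15 hsol (N+1)))
  · exact continuousOn_const.mul (contSt (cont_b_s15 hsol N) (cont_b_s15 hsol (N+1)))

lemma energy_N (hlam : 0 < lam) {t : ℝ} (ht : 0 ≤ t) (N : ℕ) :
    EE lam γ a b N t + ((∫ τ in Ioc (0:ℝ) t, DD lam γ ν μ a b N τ)
        + (∫ τ in Ioc (0:ℝ) t, BB lam γ θ di a b N τ))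
      = EE lam γ a b N 0 + ∫ τ in Ioc (0:ℝ) t, FF lam γ θ di a b (N-1) τ := by
  have hIcc : Icc (0:ℝ) t ⊆ Ici 0 := fun x hx => hx.1
  have hP : ∀ τ ∈ Ici (0:ℝ), HasDerivWithinAt (EE lam γ a b N)
      (∑ j ∈ Finset.range N,
        (2 * lam ^ (2*γ*((j:ℝ)+1)) * (a (j+1) τ * a' (j+1) τ + b (j+1) τ * b' (j+1) τ)))
      (Ici 0) τ := by
    intro τ hτ
    have h := HasDerivWithinAt.sum (u := Finset.range N)
      (A := fun j τ => lam ^ (2*γ*((j:ℝ)+1)) * ((a (j+1) τ)^2 + (b (j+1) τ)^2))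
      (A' := fun j => lam ^ (2*γ*((j:ℝ)+1)) *
        ((2:ℕ) * a (j+1) τ ^ 1 * a' (j+1) τ + (2:ℕ) * b (j+1) τ ^ 1 * b' (j+1) τ))
      (fun j _ => (((hsol.a_deriv (j+1) τ hτ).pow 2).add
        ((hsol.b_deriv (j+1) τ hτ).pow 2)).const_mul _)
    convert h using 1
    · rfl
    · rfl
    · funext x; rw [Finset.sum_apply]; rfl
    apply Finset.sum_congr rfl
    intro j _
    push_cast
    ring
  have hPc : ContinuousOn (fun τ => ∑ j ∈ Finset.range N,
      (2 * lam ^ (2*γ*((j:ℝ)+1)) * (a (j+1) τ * a' (j+1) τ + b (j+1) τ * b' (j+1) τ)))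
      (Ici 0) := by
    apply continuousOn_finset_sum
    intro j _
    exact continuousOn_const.mul
      (((cont_a_s15 hsol (j+1)).mul (hsol.a_deriv_cont (j+1))).add
        ((cont_b_s15 hsol (j+1)).mul (hsol.b_deriv_cont (j+1))))
  have hftc : ∫ τ in (0:ℝ)..t, (∑ j ∈ Finset.range N,
        (2 * lam ^ (2*γ*((j:ℝ)+1)) * (a (j+1) τ * a' (j+1) τ + b (j+1) τ * b' (j+1) τ)))
      = EE lam γ a b N t - EE lam γ a b N 0 := by
    apply intervalIntegral.integral_eq_sub_of_hasDeriv_right_of_le ht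
      ((contEE hsol N).mono hIcc)
      (fun x hx => (hP x (le_of_lt hx.1)).mono (fun y hy => le_of_lt (lt_trans hx.1 hy)))
    apply ContinuousOn.intervalIntegrable
    rw [uIcc_of_le ht]
    exact hPc.mono hIcc
  have hcongr : ∫ τ in (0:ℝ)..t, (∑ j ∈ Finset.range N,
        (2 * lam ^ (2*γ*((j:ℝ)+1)) * (a (j+1) τ * a' (j+1) τ + b (j+1) τ * b' (j+1) τ)))
      = ∫ τ in (0:ℝ)..t, (-(DD lam γ ν μ a b N τ)
          + (FF lam γ θ di a b (N-1) τ - BB lam γ θ di a b N τ)) := by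
    apply intervalIntegral.integral_congr
    intro τ hτ
    rw [uIcc_of_le ht] at hτ
    simpa only [DD, FF, BB] using sum_deriv_eq lam θ γ ν μ di hlam a b a' b' hsol τ (hIcc hτ) N
  have iD : IntervalIntegrable (DD lam γ ν μ a b N) volume 0 t := by
    apply ContinuousOn.intervalIntegrable; rw [uIcc_of_le ht]; exact (contDD hsol N).mono hIcc
  have iF : IntervalIntegrable (FF lam γ θ di a b (N-1)) volume 0 t := by
    apply ContinuousOn.intervalIntegrable; rw [uIcc_of_le ht]; exact (contFF hsol _).mono hIcc
  have iB : IntervalIntegrable (BB lam γ θ di a b N) volume 0 t := by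
    apply ContinuousOn.intervalIntegrable; rw [uIcc_of_le ht]; exact (contBB hsol N).mono hIcc
  have iDneg : IntervalIntegrable (fun τ => -DD lam γ ν μ a b N τ) volume 0 t := iD.neg
  have iFB : IntervalIntegrable
      (fun τ => FF lam γ θ di a b (N-1) τ - BB lam γ θ di a b N τ) volume 0 t := iF.sub iB
  rw [hcongr, intervalIntegral.integral_add iDneg iFB,
    intervalIntegral.integral_neg, intervalIntegral.integral_sub iF iB] at hftc
  have e1 := intervalIntegral.integral_of_le (μ := volume) (f := DD lam γ ν μ a b N) ht
  have e2 := intervalIntegral.integral_of_le (μ := volume) (f := FF lam γ θ di a b (N-1)) ht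
  have e3 := intervalIntegral.integral_of_le (μ := volume) (f := BB lam γ θ di a b N) ht
  rw [e1, e2, e3] at hftc
  linarith

end sol

lemma ennreal_sq_half (x : ℝ≥0∞) : (x * x) ^ (2⁻¹:ℝ) = x := by
  rw [← ENNReal.rpow_one x, ← ENNReal.rpow_add_of_nonneg 1 1 zero_le_one zero_le_one,
    ← ENNReal.rpow_mul]
  norm_num

lemma mul_sqrt_le_rpow (x y : ℝ≥0∞) :
    x * y ^ (2⁻¹:ℝ) ≤ x ^ (3/2:ℝ) + y ^ (3/2:ℝ) := by
  have h32 : (3/2 : ℝ) = 1 + 2⁻¹ := by norm_num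
  rcases le_total x y with h | h
  · calc x * y ^ (2⁻¹:ℝ) ≤ y * y ^ (2⁻¹:ℝ) := mul_le_mul_left h _
      _ = y ^ (3/2:ℝ) := by
          rw [h32, ENNReal.rpow_add_of_nonneg 1 2⁻¹ zero_le_one (by norm_num),
            ENNReal.rpow_one]
      _ ≤ _ := le_add_self
  · calc x * y ^ (2⁻¹:ℝ) ≤ x * x ^ (2⁻¹:ℝ) :=
          mul_le_mul_right (ENNReal.rpow_le_rpow h (by norm_num)) _
      _ = x ^ (3/2:ℝ) := by
          rw [h32, ENNReal.rpow_add_of_nonneg 1 2⁻¹ zero_le_one (by norm_num),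
            ENNReal.rpow_one]
      _ ≤ _ := self_le_add_right _ _

lemma le_rpow32_add_one (x : ℝ≥0∞) : x ≤ x ^ (3/2:ℝ) + 1 := by
  rcases le_total x 1 with h | h
  · exact le_add_left h
  · calc x = x ^ (1:ℝ) := (ENNReal.rpow_one x).symm
      _ ≤ x ^ (3/2:ℝ) := ENNReal.rpow_le_rpow_of_exponent_le h (by norm_num)
      _ ≤ _ := le_add_right le_rfl

lemma esum_mono_exp {lam s s' : ℝ} (hlam : 1 ≤ lam) (hss : s ≤ s') (u : ℕ → ℝ) :
    esum lam s u ≤ esum lam s' u := by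
  apply ENNReal.tsum_le_tsum
  intro j
  apply ENNReal.ofReal_le_ofReal
  apply mul_le_mul_of_nonneg_right _ (sq_nonneg _)
  apply Real.rpow_le_rpow_of_exponent_le hlam
  have : (0:ℝ) ≤ (j:ℝ) + 1 := by positivity
  nlinarith

lemma flux_bound {lam p q r : ℝ} (hlam : 1 < lam) (hq : 0 < q) (hr : r ≤ 2*p + q)
    (u v : ℕ → ℝ) (hv : ∀ j : ℕ, 0 ≤ v (j+2)) :
    (∑' j : ℕ, ENNReal.ofReal (lam ^ (r*((j:ℝ)+1)) * ((u (j+1))^2 * v (j+2))))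
      ≤ esum lam p u * (esum lam q v) ^ (2⁻¹:ℝ) := by
  have hl0 : (0:ℝ) < lam := lt_trans zero_lt_one hlam
  have key : ∀ j : ℕ, ENNReal.ofReal (lam ^ (r*((j:ℝ)+1)) * ((u (j+1))^2 * v (j+2)))
      ≤ ENNReal.ofReal (lam ^ (2*p*((j:ℝ)+1)) * (u (j+1))^2) * (esum lam q v) ^ (2⁻¹:ℝ) := by
    intro j
    set x : ℝ := (j:ℝ) with hx
    have hx0 : (0:ℝ) ≤ x := Nat.cast_nonneg j
    have hexp : r*(x+1) ≤ 2*p*(x+1) + q*(x+2) := by nlinarith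
    have h1 : lam ^ (r*(x+1)) * ((u (j+1))^2 * v (j+2))
        ≤ (lam ^ (2*p*(x+1)) * (u (j+1))^2) * (lam ^ (q*(x+2)) * v (j+2)) := by
      calc lam ^ (r*(x+1)) * ((u (j+1))^2 * v (j+2))
          ≤ lam ^ (2*p*(x+1) + q*(x+2)) * ((u (j+1))^2 * v (j+2)) := by
            apply mul_le_mul_of_nonneg_right
              (Real.rpow_le_rpow_of_exponent_le hlam.le hexp)
            exact mul_nonneg (sq_nonneg _) (hv j)
        _ = _ := by rw [Real.rpow_add hl0]; ring
    have h2 : ENNReal.ofReal (lam ^ (q*(x+2)) * v (j+2)) ≤ (esum lam q v) ^ (2⁻¹:ℝ) := by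
      have hy : (0:ℝ) ≤ lam ^ (q*(x+2)) * v (j+2) :=
        mul_nonneg (Real.rpow_nonneg hl0.le _) (hv j)
      have hsq : ENNReal.ofReal (lam ^ (q*(x+2)) * v (j+2))
            * ENNReal.ofReal (lam ^ (q*(x+2)) * v (j+2))
          ≤ esum lam q v := by
        rw [← ENNReal.ofReal_mul hy]
        refine le_trans (le_of_eq ?_) (ENNReal.le_tsum (j+1))
        congr 1
        have hA : lam ^ (q*(x+2)) * lam ^ (q*(x+2)) = lam ^ (2*q*((((j+1):ℕ):ℝ)+1)) := by
          rw [← Real.rpow_add hl0]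
          congr 1
          push_cast
          ring
        push_cast at hA ⊢
        rw [show j+1+1 = j+2 from by omega]
        linear_combination (v (j+2))^2 * hA
      calc ENNReal.ofReal (lam ^ (q*(x+2)) * v (j+2))
          = (ENNReal.ofReal (lam ^ (q*(x+2)) * v (j+2))
              * ENNReal.ofReal (lam ^ (q*(x+2)) * v (j+2))) ^ (2⁻¹:ℝ) :=
            (ennreal_sq_half _).symm
        _ ≤ _ := ENNReal.rpow_le_rpow hsq (by norm_num)
    calc ENNReal.ofReal (lam ^ (r*(x+1)) * ((u (j+1))^2 * v (j+2)))
        ≤ ENNReal.ofReal ((lam ^ (2*p*(x+1)) * (u (j+1))^2) * (lam ^ (q*(x+2)) * v (j+2))) :=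
          ENNReal.ofReal_le_ofReal h1
      _ = ENNReal.ofReal (lam ^ (2*p*(x+1)) * (u (j+1))^2)
            * ENNReal.ofReal (lam ^ (q*(x+2)) * v (j+2)) :=
          ENNReal.ofReal_mul (mul_nonneg (Real.rpow_nonneg hl0.le _) (sq_nonneg _))
      _ ≤ _ := mul_le_mul_right h2 _
  calc (∑' j : ℕ, ENNReal.ofReal (lam ^ (r*((j:ℝ)+1)) * ((u (j+1))^2 * v (j+2))))
      ≤ ∑' j : ℕ, ENNReal.ofReal (lam ^ (2*p*((j:ℝ)+1)) * (u (j+1))^2)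
          * (esum lam q v) ^ (2⁻¹:ℝ) := ENNReal.tsum_le_tsum key
    _ = _ := ENNReal.tsum_mul_right

lemma aem_ofReal {f : ℝ → ℝ} (hf : ContinuousOn f (Ici 0)) {t : ℝ} :
    AEMeasurable (fun τ => ENNReal.ofReal (f τ)) (volume.restrict (Icc 0 t)) := by
  have h : AEMeasurable (fun τ => ENNReal.ofReal (f τ)) (volume.restrict (Ici 0)) :=
    (ENNReal.continuous_ofReal.comp_continuousOn hf).aemeasurable measurableSet_Ici
  exact h.mono_measure (Measure.restrict_mono Icc_subset_Ici_self le_rfl)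

lemma tendEE (lam γ : ℝ) (hl0 : 0 < lam) (a b : ℕ → ℝ → ℝ) (τ : ℝ) :
    Filter.Tendsto (fun N => ENNReal.ofReal (EE lam γ a b N τ)) Filter.atTop
      (nhds (esum lam γ (fun j => a j τ) + esum lam γ (fun j => b j τ))) := by
  have nn : ∀ (u : ℕ → ℝ → ℝ) (j : ℕ), 0 ≤ lam ^ (2*γ*((j:ℝ)+1)) * (u (j+1) τ)^2 :=
    fun u j => mul_nonneg (Real.rpow_nonneg hl0.le _) (sq_nonneg _)
  have hof : ∀ N, ENNReal.ofReal (EE lam γ a b N τ)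
      = ∑ j ∈ Finset.range N, (ENNReal.ofReal (lam^(2*γ*((j:ℝ)+1)) * (a (j+1) τ)^2)
          + ENNReal.ofReal (lam^(2*γ*((j:ℝ)+1)) * (b (j+1) τ)^2)) := by
    intro N
    rw [EE, show (∑ j ∈ Finset.range N, lam ^ (2*γ*((j:ℝ)+1)) * ((a (j+1) τ)^2 + (b (j+1) τ)^2))
        = ∑ j ∈ Finset.range N, (lam ^ (2*γ*((j:ℝ)+1)) * (a (j+1) τ)^2
            + lam ^ (2*γ*((j:ℝ)+1)) * (b (j+1) τ)^2)
      from Finset.sum_congr rfl fun j _ => mul_add _ _ _,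
      ENNReal.ofReal_sum_of_nonneg (fun j _ => add_nonneg (nn a j) (nn b j))]
    exact Finset.sum_congr rfl fun j _ => ENNReal.ofReal_add (nn a j) (nn b j)
  have h := ENNReal.tendsto_nat_tsum (fun j =>
    ENNReal.ofReal (lam^(2*γ*((j:ℝ)+1)) * (a (j+1) τ)^2)
      + ENNReal.ofReal (lam^(2*γ*((j:ℝ)+1)) * (b (j+1) τ)^2))
  rw [ENNReal.tsum_add] at h
  exact (h.congr fun N => (hof N).symm).congr' (by rfl) |>.mono_right (le_of_eq (by simp [esum]))

section sol2
variable {lam θ γ ν μ di : ℝ} {a b a' b' : ℕ → ℝ → ℝ}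
  (hsol : IsDyadicSol lam θ ν μ di a b a' b')
include hsol

lemma tendDD (hlam : 1 < lam) (hν : 0 ≤ ν) (hμ : 0 ≤ μ) (t : ℝ) :
    Filter.Tendsto (fun N => ∫⁻ τ in Icc (0:ℝ) t, ENNReal.ofReal (DD lam γ ν μ a b N τ))
      Filter.atTop
      (nhds (∫⁻ τ in Icc (0:ℝ) t, (ENNReal.ofReal (2*ν) * esum lam (γ+1) (fun j => a j τ)
          + ENNReal.ofReal (2*μ) * esum lam (γ+1) (fun j => b j τ)))) := by
  have hl0 : (0:ℝ) < lam := lt_trans zero_lt_one hlam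
  have nn : ∀ (c : ℝ), 0 ≤ c → ∀ (u : ℕ → ℝ → ℝ) (j : ℕ) (τ : ℝ),
      0 ≤ 2*c*(lam ^ (2*γ*((j:ℝ)+1))*lam ^ (2*((j:ℝ)+1)))*(u (j+1) τ)^2 := fun c hc u j τ =>
    mul_nonneg (mul_nonneg (by linarith)
      (mul_nonneg (Real.rpow_nonneg hl0.le _) (Real.rpow_nonneg hl0.le _))) (sq_nonneg _)
  have hof : ∀ N τ, ENNReal.ofReal (DD lam γ ν μ a b N τ)
      = ∑ j ∈ Finset.range N,
          (ENNReal.ofReal (2*ν*(lam^(2*γ*((j:ℝ)+1))*lam^(2*((j:ℝ)+1)))*(a (j+1) τ)^2)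
            + ENNReal.ofReal (2*μ*(lam^(2*γ*((j:ℝ)+1))*lam^(2*((j:ℝ)+1)))*(b (j+1) τ)^2)) := by
    intro N τ
    rw [DD, ENNReal.ofReal_sum_of_nonneg (fun j _ => add_nonneg (nn ν hν a j τ) (nn μ hμ b j τ))]
    exact Finset.sum_congr rfl fun j _ => ENNReal.ofReal_add (nn ν hν a j τ) (nn μ hμ b j τ)
  have hterm : ∀ (c : ℝ), 0 ≤ c → ∀ (u : ℕ → ℝ → ℝ) (j : ℕ) (τ : ℝ),
      ENNReal.ofReal (2*c*(lam^(2*γ*((j:ℝ)+1))*lam^(2*((j:ℝ)+1)))*(u (j+1) τ)^2)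
        = ENNReal.ofReal (2*c) * ENNReal.ofReal (lam ^ (2*(γ+1)*((j:ℝ)+1)) * (u (j+1) τ)^2) := by
    intro c hc u j τ
    rw [← ENNReal.ofReal_mul (by linarith : (0:ℝ) ≤ 2*c)]
    congr 1
    rw [show 2*(γ+1)*((j:ℝ)+1) = 2*γ*((j:ℝ)+1) + 2*((j:ℝ)+1) from by ring, Real.rpow_add hl0]
    ring
  have hsup : ∀ τ : ℝ, (⨆ N, ENNReal.ofReal (DD lam γ ν μ a b N τ))
      = ENNReal.ofReal (2*ν) * esum lam (γ+1) (fun j => a j τ)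
        + ENNReal.ofReal (2*μ) * esum lam (γ+1) (fun j => b j τ) := by
    intro τ
    simp_rw [hof]
    rw [← ENNReal.tsum_eq_iSup_nat, ENNReal.tsum_add]
    congr 1
    · rw [show (fun j : ℕ => ENNReal.ofReal (2*ν*(lam^(2*γ*((j:ℝ)+1))*lam^(2*((j:ℝ)+1)))*(a (j+1) τ)^2))
          = (fun j : ℕ => ENNReal.ofReal (2*ν) * ENNReal.ofReal (lam ^ (2*(γ+1)*((j:ℝ)+1)) * (a (j+1) τ)^2))
        from funext fun j => hterm ν hν a j τ, ENNReal.tsum_mul_left]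
      rfl
    · rw [show (fun j : ℕ => ENNReal.ofReal (2*μ*(lam^(2*γ*((j:ℝ)+1))*lam^(2*((j:ℝ)+1)))*(b (j+1) τ)^2))
          = (fun j : ℕ => ENNReal.ofReal (2*μ) * ENNReal.ofReal (lam ^ (2*(γ+1)*((j:ℝ)+1)) * (b (j+1) τ)^2))
        from funext fun j => hterm μ hμ b j τ, ENNReal.tsum_mul_left]
      rfl
  have hmono : ∀ τ : ℝ, Monotone (fun N => ENNReal.ofReal (DD lam γ ν μ a b N τ)) := by
    intro τ M N hMN
    simp_rw [hof]
    exact Finset.sum_le_sum_of_subset (Finset.range_subset_range.2 hMN)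
  have haem : ∀ N, AEMeasurable (fun τ => ENNReal.ofReal (DD lam γ ν μ a b N τ))
      (volume.restrict (Icc (0:ℝ) t)) := fun N => aem_ofReal (contDD hsol N)
  have hmc := lintegral_iSup' haem (ae_of_all _ hmono)
  have hmonoI : Monotone (fun N => ∫⁻ τ in Icc (0:ℝ) t, ENNReal.ofReal (DD lam γ ν μ a b N τ)) :=
    fun M N hMN => lintegral_mono (fun τ => hmono τ hMN)
  have := tendsto_atTop_iSup hmonoI
  rw [← hmc, lintegral_congr hsup] at this
  exact this

end sol2

lemma eflux_eq {lam γ e s : ℝ} (hl0 : 0 < lam) (hs : s = 2*γ + e) (u v : ℕ → ℝ → ℝ) (τ : ℝ) :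
    eflux lam s u v τ = ∑' j : ℕ, ENNReal.ofReal (St lam γ e u v (j+1) τ) := by
  refine tsum_congr fun j => ?_
  congr 1
  simp only [St]
  push_cast
  rw [hs, show (2*γ+e)*((j:ℝ)+1) = 2*γ*((j:ℝ)+1) + e*((j:ℝ)+1) from by ring, Real.rpow_add hl0]
  ring

section sol3
variable {lam θ γ ν μ di : ℝ} {a b a' b' : ℕ → ℝ → ℝ}
  (hsol : IsDyadicSol lam θ ν μ di a b a' b')
include hsol

lemma tendFF (hlam : 1 < lam) (hγ : 0 ≤ γ) (hdi : 0 < di)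
    (hann : ∀ (k : ℕ) (τ : ℝ), τ ∈ Ici (0:ℝ) → 0 ≤ a k τ)
    (hbnn : ∀ (k : ℕ) (τ : ℝ), τ ∈ Ici (0:ℝ) → 0 ≤ b k τ)
    (t : ℝ) :
    Filter.Tendsto (fun N => ∫⁻ τ in Icc (0:ℝ) t, ENNReal.ofReal (FF lam γ θ di a b (N-1) τ))
      Filter.atTop
      (nhds (ENNReal.ofReal (2*(lam^(2*γ)-1)) * (∫⁻ τ in Icc (0:ℝ) t, eflux lam (2*γ+θ) a a τ)
        + (ENNReal.ofReal (2*(lam^(2*γ)-1)) * (∫⁻ τ in Icc (0:ℝ) t, eflux lam (2*γ+θ) b a τ)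
          + ENNReal.ofReal (2*di*(lam^(2*γ)-1))
            * (∫⁻ τ in Icc (0:ℝ) t, eflux lam (2*γ+θ+1) b b τ)))) := by
  have hl0 : (0:ℝ) < lam := lt_trans zero_lt_one hlam
  have hclam : (0:ℝ) ≤ lam ^ (2*γ) - 1 := by
    have h := Real.one_le_rpow hlam.le (by linarith : (0:ℝ) ≤ 2*γ)
    linarith
  have hStnn : ∀ (e : ℝ) (u v : ℕ → ℝ → ℝ),
      (∀ (k : ℕ) (τ : ℝ), τ ∈ Ici (0:ℝ) → 0 ≤ v k τ) →
      ∀ (k : ℕ) (τ : ℝ), τ ∈ Ici (0:ℝ) → 0 ≤ St lam γ e u v k τ := by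
    intro e u v hv k τ hτ
    exact mul_nonneg (mul_nonneg (mul_nonneg (Real.rpow_nonneg hl0.le _)
      (Real.rpow_nonneg hl0.le _)) (sq_nonneg _)) (hv _ _ hτ)
  have haem : ∀ (e : ℝ) (u v : ℕ → ℝ → ℝ) (k : ℕ),
      (∀ i, ContinuousOn (u i) (Ici 0)) → (∀ i, ContinuousOn (v i) (Ici 0)) →
      AEMeasurable (fun τ => ENNReal.ofReal (St lam γ e u v k τ))
        (volume.restrict (Icc (0:ℝ) t)) := fun e u v k hu hv =>
    aem_ofReal (contSt (hu k) (hv (k+1)))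
  have hterm1 : ∀ x : ℝ, ENNReal.ofReal ((2*(lam^(2*γ)-1))*x)
      = ENNReal.ofReal (2*(lam^(2*γ)-1)) * ENNReal.ofReal x := fun x =>
    ENNReal.ofReal_mul (by linarith)
  have hterm2 : ∀ x : ℝ, ENNReal.ofReal ((2*di*(lam^(2*γ)-1))*x)
      = ENNReal.ofReal (2*di*(lam^(2*γ)-1)) * ENNReal.ofReal x := fun x =>
    ENNReal.ofReal_mul (by nlinarith)
  have step1 : ∀ M, ∫⁻ τ in Icc (0:ℝ) t, ENNReal.ofReal (FF lam γ θ di a b M τ)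
      = ∑ j ∈ Finset.range M,
          (ENNReal.ofReal (2*(lam^(2*γ)-1))
              * (∫⁻ τ in Icc (0:ℝ) t, ENNReal.ofReal (St lam γ θ a a (j+1) τ))
            + (ENNReal.ofReal (2*(lam^(2*γ)-1))
                * (∫⁻ τ in Icc (0:ℝ) t, ENNReal.ofReal (St lam γ θ b a (j+1) τ))
              + ENNReal.ofReal (2*di*(lam^(2*γ)-1))
                * (∫⁻ τ in Icc (0:ℝ) t, ENNReal.ofReal (St lam γ (θ+1) b b (j+1) τ)))) := by
    intro M
    have hofFF : ∀ τ, τ ∈ Icc (0:ℝ) t → ENNReal.ofReal (FF lam γ θ di a b M τ)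
        = ∑ j ∈ Finset.range M,
            (ENNReal.ofReal (2*(lam^(2*γ)-1)) * ENNReal.ofReal (St lam γ θ a a (j+1) τ)
              + (ENNReal.ofReal (2*(lam^(2*γ)-1)) * ENNReal.ofReal (St lam γ θ b a (j+1) τ)
                + ENNReal.ofReal (2*di*(lam^(2*γ)-1))
                  * ENNReal.ofReal (St lam γ (θ+1) b b (j+1) τ))) := by
      intro τ hτ
      have hτ' : τ ∈ Ici (0:ℝ) := hτ.1
      rw [FF, Finset.mul_sum, ENNReal.ofReal_sum_of_nonneg (fun j _ => by
        have h1 := hStnn θ a a hann (j+1) τ hτ'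
        have h2 := hStnn θ b a hann (j+1) τ hτ'
        have h3 := hStnn (θ+1) b b hbnn (j+1) τ hτ'
        have h4 := mul_nonneg hdi.le h3
        exact mul_nonneg hclam (by linarith))]
      refine Finset.sum_congr rfl fun j _ => ?_
      have h1 := hStnn θ a a hann (j+1) τ hτ'
      have h2 := hStnn θ b a hann (j+1) τ hτ'
      have h3 := hStnn (θ+1) b b hbnn (j+1) τ hτ'
      rw [show (lam^(2*γ)-1)*(2*St lam γ θ a a (j+1) τ + 2*St lam γ θ b a (j+1) τ
            + 2*di*St lam γ (θ+1) b b (j+1) τ)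
          = (2*(lam^(2*γ)-1))*St lam γ θ a a (j+1) τ
            + ((2*(lam^(2*γ)-1))*St lam γ θ b a (j+1) τ
              + (2*di*(lam^(2*γ)-1))*St lam γ (θ+1) b b (j+1) τ) from by ring,
        ENNReal.ofReal_add
          (by nlinarith [mul_nonneg hclam h1])
          (by nlinarith [mul_nonneg hclam h2, mul_nonneg hdi.le (mul_nonneg hclam h3)]),
        ENNReal.ofReal_add
          (by nlinarith [mul_nonneg hclam h2])
          (by nlinarith [mul_nonneg hdi.le (mul_nonneg hclam h3)]),
        hterm1, hterm1, hterm2]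
    rw [setLIntegral_congr_fun measurableSet_Icc hofFF,
      lintegral_finset_sum' _ (fun j _ =>
        (((haem θ a a (j+1) (cont_a_s15 hsol) (cont_a_s15 hsol)).const_mul _).fun_add
          (((haem θ b a (j+1) (cont_b_s15 hsol) (cont_a_s15 hsol)).const_mul _).fun_add
            ((haem (θ+1) b b (j+1) (cont_b_s15 hsol) (cont_b_s15 hsol)).const_mul _))))]
    refine Finset.sum_congr rfl fun j _ => ?_
    rw [lintegral_add_left' ((haem θ a a (j+1) (cont_a_s15 hsol) (cont_a_s15 hsol)).const_mul _),
      lintegral_add_left' ((haem θ b a (j+1) (cont_b_s15 hsol) (cont_a_s15 hsol)).const_mul _),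
      lintegral_const_mul' _ _ ENNReal.ofReal_ne_top,
      lintegral_const_mul' _ _ ENNReal.ofReal_ne_top,
      lintegral_const_mul' _ _ ENNReal.ofReal_ne_top]
  have h := (ENNReal.tendsto_nat_tsum (fun j =>
      (ENNReal.ofReal (2*(lam^(2*γ)-1))
          * (∫⁻ τ in Icc (0:ℝ) t, ENNReal.ofReal (St lam γ θ a a (j+1) τ))
        + (ENNReal.ofReal (2*(lam^(2*γ)-1))
            * (∫⁻ τ in Icc (0:ℝ) t, ENNReal.ofReal (St lam γ θ b a (j+1) τ))
          + ENNReal.ofReal (2*di*(lam^(2*γ)-1))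
            * (∫⁻ τ in Icc (0:ℝ) t, ENNReal.ofReal (St lam γ (θ+1) b b (j+1) τ)))))).comp
    (Filter.tendsto_sub_atTop_nat 1)
  rw [ENNReal.tsum_add, ENNReal.tsum_add, ENNReal.tsum_mul_left, ENNReal.tsum_mul_left,
    ENNReal.tsum_mul_left,
    ← lintegral_tsum (fun j => haem θ a a (j+1) (cont_a_s15 hsol) (cont_a_s15 hsol)),
    ← lintegral_tsum (fun j => haem θ b a (j+1) (cont_b_s15 hsol) (cont_a_s15 hsol)),
    ← lintegral_tsum (fun j => haem (θ+1) b b (j+1) (cont_b_s15 hsol) (cont_b_s15 hsol)),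
    lintegral_congr (fun τ => (eflux_eq hl0 rfl a a τ).symm),
    lintegral_congr (fun τ => (eflux_eq hl0 rfl b a τ).symm),
    lintegral_congr (fun τ => (eflux_eq hl0 (show 2*γ+θ+1 = 2*γ+(θ+1) from by ring) b b τ).symm)]
    at h
  exact h.congr fun N => (step1 (N-1)).symm

lemma tendBB (hlam : 1 < lam) (hdi : 0 < di)
    (hann : ∀ (k : ℕ) (τ : ℝ), τ ∈ Ici (0:ℝ) → 0 ≤ a k τ)
    (hbnn : ∀ (k : ℕ) (τ : ℝ), τ ∈ Ici (0:ℝ) → 0 ≤ b k τ)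
    (t : ℝ)
    (hfaa : (∫⁻ τ in Icc (0:ℝ) t, eflux lam (2*γ+θ) a a τ) ≠ ⊤)
    (hfba : (∫⁻ τ in Icc (0:ℝ) t, eflux lam (2*γ+θ) b a τ) ≠ ⊤)
    (hfbb : (∫⁻ τ in Icc (0:ℝ) t, eflux lam (2*γ+θ+1) b b τ) ≠ ⊤) :
    Filter.Tendsto (fun N => ∫⁻ τ in Icc (0:ℝ) t, ENNReal.ofReal (BB lam γ θ di a b N τ))
      Filter.atTop (nhds 0) := by
  have hl0 : (0:ℝ) < lam := lt_trans zero_lt_one hlam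
  have hStnn : ∀ (e : ℝ) (u v : ℕ → ℝ → ℝ),
      (∀ (k : ℕ) (τ : ℝ), τ ∈ Ici (0:ℝ) → 0 ≤ v k τ) →
      ∀ (k : ℕ) (τ : ℝ), τ ∈ Ici (0:ℝ) → 0 ≤ St lam γ e u v k τ := by
    intro e u v hv k τ hτ
    exact mul_nonneg (mul_nonneg (mul_nonneg (Real.rpow_nonneg hl0.le _)
      (Real.rpow_nonneg hl0.le _)) (sq_nonneg _)) (hv _ _ hτ)
  have haem : ∀ (e : ℝ) (u v : ℕ → ℝ → ℝ) (k : ℕ),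
      (∀ i, ContinuousOn (u i) (Ici 0)) → (∀ i, ContinuousOn (v i) (Ici 0)) →
      AEMeasurable (fun τ => ENNReal.ofReal (St lam γ e u v k τ))
        (volume.restrict (Icc (0:ℝ) t)) := fun e u v k hu hv =>
    aem_ofReal (contSt (hu k) (hv (k+1)))
  have htsum : ∀ (e s : ℝ) (u v : ℕ → ℝ → ℝ), s = 2*γ + e →
      (∀ i, ContinuousOn (u i) (Ici 0)) → (∀ i, ContinuousOn (v i) (Ici 0)) →
      (∑' j : ℕ, ∫⁻ τ in Icc (0:ℝ) t, ENNReal.ofReal (St lam γ e u v (j+1) τ))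
        = ∫⁻ τ in Icc (0:ℝ) t, eflux lam s u v τ := by
    intro e s u v hs hu hv
    rw [← lintegral_tsum (fun j => haem e u v (j+1) hu hv)]
    exact lintegral_congr fun τ => (eflux_eq hl0 hs u v τ).symm
  have h0aa : Filter.Tendsto
      (fun k => ∫⁻ τ in Icc (0:ℝ) t, ENNReal.ofReal (St lam γ θ a a k τ))
      Filter.atTop (nhds 0) := by
    refine (Filter.tendsto_add_atTop_iff_nat 1).mp
      (ENNReal.tendsto_atTop_zero_of_tsum_ne_top ?_)
    rw [htsum θ (2*γ+θ) a a rfl (cont_a_s15 hsol) (cont_a_s15 hsol)]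
    exact hfaa
  have h0ba : Filter.Tendsto
      (fun k => ∫⁻ τ in Icc (0:ℝ) t, ENNReal.ofReal (St lam γ θ b a k τ))
      Filter.atTop (nhds 0) := by
    refine (Filter.tendsto_add_atTop_iff_nat 1).mp
      (ENNReal.tendsto_atTop_zero_of_tsum_ne_top ?_)
    rw [htsum θ (2*γ+θ) b a rfl (cont_b_s15 hsol) (cont_a_s15 hsol)]
    exact hfba
  have h0bb : Filter.Tendsto
      (fun k => ∫⁻ τ in Icc (0:ℝ) t, ENNReal.ofReal (St lam γ (θ+1) b b k τ))
      Filter.atTop (nhds 0) := by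
    refine (Filter.tendsto_add_atTop_iff_nat 1).mp
      (ENNReal.tendsto_atTop_zero_of_tsum_ne_top ?_)
    rw [htsum (θ+1) (2*γ+θ+1) b b (by ring) (cont_b_s15 hsol) (cont_b_s15 hsol)]
    exact hfbb
  have hBBint : ∀ N, ∫⁻ τ in Icc (0:ℝ) t, ENNReal.ofReal (BB lam γ θ di a b N τ)
      = ENNReal.ofReal 2 * (∫⁻ τ in Icc (0:ℝ) t, ENNReal.ofReal (St lam γ θ a a N τ))
        + (ENNReal.ofReal 2 * (∫⁻ τ in Icc (0:ℝ) t, ENNReal.ofReal (St lam γ θ b a N τ))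
          + ENNReal.ofReal (2*di)
            * (∫⁻ τ in Icc (0:ℝ) t, ENNReal.ofReal (St lam γ (θ+1) b b N τ))) := by
    intro N
    have hof : ∀ τ, τ ∈ Icc (0:ℝ) t → ENNReal.ofReal (BB lam γ θ di a b N τ)
        = ENNReal.ofReal 2 * ENNReal.ofReal (St lam γ θ a a N τ)
          + (ENNReal.ofReal 2 * ENNReal.ofReal (St lam γ θ b a N τ)
            + ENNReal.ofReal (2*di) * ENNReal.ofReal (St lam γ (θ+1) b b N τ)) := by
      intro τ hτ
      have hτ' : τ ∈ Ici (0:ℝ) := hτ.1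
      have h1 := hStnn θ a a hann N τ hτ'
      have h2 := hStnn θ b a hann N τ hτ'
      have h3 := hStnn (θ+1) b b hbnn N τ hτ'
      have hd2 : (0:ℝ) ≤ 2*di := by linarith
      rw [BB, show 2*St lam γ θ a a N τ + 2*St lam γ θ b a N τ + 2*di*St lam γ (θ+1) b b N τ
          = 2*St lam γ θ a a N τ + (2*St lam γ θ b a N τ + (2*di)*St lam γ (θ+1) b b N τ)
          from by ring,
        ENNReal.ofReal_add (by linarith)
          (by nlinarith [mul_nonneg hdi.le h3]),
        ENNReal.ofReal_add (by linarith)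
          (by nlinarith [mul_nonneg hdi.le h3]),
        ENNReal.ofReal_mul (by norm_num : (0:ℝ) ≤ 2),
        ENNReal.ofReal_mul (by norm_num : (0:ℝ) ≤ 2),
        ENNReal.ofReal_mul hd2]
    rw [setLIntegral_congr_fun measurableSet_Icc hof,
      lintegral_add_left' ((haem θ a a N (cont_a_s15 hsol) (cont_a_s15 hsol)).const_mul _),
      lintegral_add_left' ((haem θ b a N (cont_b_s15 hsol) (cont_a_s15 hsol)).const_mul _),
      lintegral_const_mul' _ _ ENNReal.ofReal_ne_top,
      lintegral_const_mul' _ _ ENNReal.ofReal_ne_top,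
      lintegral_const_mul' _ _ ENNReal.ofReal_ne_top]
  have hlim := (ENNReal.Tendsto.const_mul (a := ENNReal.ofReal 2) h0aa
      (Or.inr ENNReal.ofReal_ne_top)).add
    ((ENNReal.Tendsto.const_mul (a := ENNReal.ofReal 2) h0ba
        (Or.inr ENNReal.ofReal_ne_top)).add
      (ENNReal.Tendsto.const_mul (a := ENNReal.ofReal (2*di)) h0bb
        (Or.inr ENNReal.ofReal_ne_top)))
  simp only [mul_zero, add_zero] at hlim
  exact hlim.congr fun N => (hBBint N).symm

end sol3
theorem energy_equality_HallMHD
    (lam θ γ ν μ di : ℝ) (hlam : 1 < lam) (hγ : 0 < γ) (hθ : 3 + γ < θ)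
    (hν : 0 ≤ ν) (hμ : 0 ≤ μ) (hdi : 0 < di)
    (a b a' b' : ℕ → ℝ → ℝ)
    (hsol : IsDyadicSol lam θ ν μ di a b a' b')
    (hpos : PositiveSol a b)
    (hinit : esum lam γ (fun j => a j 0) + esum lam γ (fun j => b j 0) < ⊤)
    (hloc : ∀ T : ℝ, 0 < T →
      (∫⁻ t in Icc (0:ℝ) T,
          ((esum lam (θ / 3 + 2 * γ / 3) (fun j => a j t)) ^ (3/2 : ℝ)
            + (esum lam ((θ + 1) / 3 + 2 * γ / 3) (fun j => b j t)) ^ (3/2 : ℝ))) < ⊤) :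
    (∀ T : ℝ, 0 < T →
      (∫⁻ τ in Icc (0:ℝ) T, esum lam (γ + 1) (fun j => a j τ)) < ⊤ ∧
      (∫⁻ τ in Icc (0:ℝ) T, esum lam (γ + 1) (fun j => b j τ)) < ⊤ ∧
      (∫⁻ τ in Icc (0:ℝ) T, eflux lam (2 * γ + θ) a a τ) < ⊤ ∧
      (∫⁻ τ in Icc (0:ℝ) T, eflux lam (2 * γ + θ) b a τ) < ⊤ ∧
      (∫⁻ τ in Icc (0:ℝ) T, eflux lam (2 * γ + θ + 1) b b τ) < ⊤) ∧
    (∀ t ∈ Ici (0:ℝ),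
      esum lam γ (fun j => a j t) + esum lam γ (fun j => b j t) < ⊤) ∧
    (∀ t ∈ Ici (0:ℝ),
      esum lam γ (fun j => a j t) + esum lam γ (fun j => b j t)
        + (∫⁻ τ in Icc (0:ℝ) t,
            (ENNReal.ofReal (2 * ν) * esum lam (γ + 1) (fun j => a j τ)
              + ENNReal.ofReal (2 * μ) * esum lam (γ + 1) (fun j => b j τ)))
      = esum lam γ (fun j => a j 0) + esum lam γ (fun j => b j 0)
        + ENNReal.ofReal (2 * (lam ^ (2 * γ) - 1))
            * (∫⁻ τ in Icc (0:ℝ) t, eflux lam (2 * γ + θ) a a τ)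
        + ENNReal.ofReal (2 * di * (lam ^ (2 * γ) - 1))
            * (∫⁻ τ in Icc (0:ℝ) t, eflux lam (2 * γ + θ + 1) b b τ)
        + ENNReal.ofReal (2 * (lam ^ (2 * γ) - 1))
            * (∫⁻ τ in Icc (0:ℝ) t, eflux lam (2 * γ + θ) b a τ)) := by

  have hl0 : (0:ℝ) < lam := lt_trans zero_lt_one hlam
  have hann : ∀ (k : ℕ) (τ : ℝ), τ ∈ Ici (0:ℝ) → 0 ≤ a k τ := by
    intro k τ hτ
    match k with
    | 0 => simp [hsol.a_zero]
    | (k+1) => exact (hpos (k+1) (Nat.le_add_left 1 k) τ hτ).1.le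
  have hbnn : ∀ (k : ℕ) (τ : ℝ), τ ∈ Ici (0:ℝ) → 0 ≤ b k τ := by
    intro k τ hτ
    match k with
    | 0 => simp [hsol.b_zero]
    | (k+1) => exact (hpos (k+1) (Nat.le_add_left 1 k) τ hτ).2.le
  have hclam : (0:ℝ) ≤ lam ^ (2*γ) - 1 := by
    have h := Real.one_le_rpow hlam.le (by linarith : (0:ℝ) ≤ 2*γ)
    linarith
  set Φ : ℝ → ℝ≥0∞ := fun τ =>
    (esum lam (θ/3 + 2*γ/3) (fun j => a j τ)) ^ (3/2:ℝ)
      + (esum lam ((θ+1)/3 + 2*γ/3) (fun j => b j τ)) ^ (3/2:ℝ) with hΦdef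
  have hPhi : ∀ t : ℝ, 0 ≤ t → (∫⁻ τ in Icc (0:ℝ) t, Φ τ) < ⊤ := by
    intro t ht
    exact lt_of_le_of_lt
      (lintegral_mono_set (Icc_subset_Icc le_rfl (by linarith)))
      (hloc (t+1) (by linarith))
  -- pointwise flux bounds
  have hptaa : ∀ τ : ℝ, τ ∈ Ici (0:ℝ) → eflux lam (2*γ+θ) a a τ ≤ Φ τ + Φ τ := by
    intro τ hτ
    have h := flux_bound (p := θ/3 + 2*γ/3) (q := θ/3 + 2*γ/3) (r := 2*γ+θ) hlam
      (by linarith) (le_of_eq (by ring)) (fun k => a k τ) (fun k => a k τ)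
      (fun j => hann (j+2) τ hτ)
    refine le_trans h (le_trans (mul_sqrt_le_rpow _ _) ?_)
    exact add_le_add (self_le_add_right _ _) (self_le_add_right _ _)
  have hptba : ∀ τ : ℝ, τ ∈ Ici (0:ℝ) → eflux lam (2*γ+θ) b a τ ≤ Φ τ + Φ τ := by
    intro τ hτ
    have h := flux_bound (p := (θ+1)/3 + 2*γ/3) (q := θ/3 + 2*γ/3) (r := 2*γ+θ) hlam
      (by linarith) (by linarith) (fun k => b k τ) (fun k => a k τ)
      (fun j => hann (j+2) τ hτ)
    refine le_trans h (le_trans (mul_sqrt_le_rpow _ _) ?_)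
    exact add_le_add (le_add_self) (self_le_add_right _ _)
  have hptbb : ∀ τ : ℝ, τ ∈ Ici (0:ℝ) → eflux lam (2*γ+θ+1) b b τ ≤ Φ τ + Φ τ := by
    intro τ hτ
    have h := flux_bound (p := (θ+1)/3 + 2*γ/3) (q := (θ+1)/3 + 2*γ/3) (r := 2*γ+θ+1) hlam
      (by linarith) (le_of_eq (by ring)) (fun k => b k τ) (fun k => b k τ)
      (fun j => hbnn (j+2) τ hτ)
    refine le_trans h (le_trans (mul_sqrt_le_rpow _ _) ?_)
    exact add_le_add (le_add_self) (le_add_self)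
  have hfluxfin : ∀ (s : ℝ) (u v : ℕ → ℝ → ℝ),
      (∀ τ : ℝ, τ ∈ Ici (0:ℝ) → eflux lam s u v τ ≤ Φ τ + Φ τ) →
      ∀ t : ℝ, 0 ≤ t → (∫⁻ τ in Icc (0:ℝ) t, eflux lam s u v τ) < ⊤ := by
    intro s u v hpt t ht
    calc (∫⁻ τ in Icc (0:ℝ) t, eflux lam s u v τ)
        ≤ ∫⁻ τ in Icc (0:ℝ) t, (Φ τ + Φ τ) := lintegral_mono_ae
          ((ae_restrict_iff' measurableSet_Icc).2 (ae_of_all _ fun τ hτ => hpt τ hτ.1))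
      _ = ∫⁻ τ in Icc (0:ℝ) t, 2 * Φ τ := lintegral_congr fun τ => (two_mul _).symm
      _ = 2 * ∫⁻ τ in Icc (0:ℝ) t, Φ τ := lintegral_const_mul' 2 _ (by norm_num)
      _ < ⊤ := ENNReal.mul_lt_top (by norm_num) (hPhi t ht)
  have hfaa := hfluxfin (2*γ+θ) a a hptaa
  have hfba := hfluxfin (2*γ+θ) b a hptba
  have hfbb := hfluxfin (2*γ+θ+1) b b hptbb
  -- dissipation-norm finiteness
  have hdis : ∀ (sm : ℝ) (u : ℕ → ℝ → ℝ), (γ + 1 ≤ sm) →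
      (∀ τ : ℝ, (esum lam sm (fun j => u j τ)) ^ (3/2:ℝ) ≤ Φ τ) →
      ∀ t : ℝ, 0 ≤ t → (∫⁻ τ in Icc (0:ℝ) t, esum lam (γ+1) (fun j => u j τ)) < ⊤ := by
    intro sm u hsm hle t ht
    have hpt : ∀ τ : ℝ, esum lam (γ+1) (fun j => u j τ) ≤ Φ τ + 1 := by
      intro τ
      calc esum lam (γ+1) (fun j => u j τ)
          ≤ esum lam sm (fun j => u j τ) := esum_mono_exp hlam.le hsm _
        _ ≤ (esum lam sm (fun j => u j τ)) ^ (3/2:ℝ) + 1 := le_rpow32_add_one _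
        _ ≤ Φ τ + 1 := add_le_add (hle τ) le_rfl
    calc (∫⁻ τ in Icc (0:ℝ) t, esum lam (γ+1) (fun j => u j τ))
        ≤ ∫⁻ τ in Icc (0:ℝ) t, (Φ τ + 1) := lintegral_mono hpt
      _ = (∫⁻ τ in Icc (0:ℝ) t, Φ τ) + ∫⁻ _ in Icc (0:ℝ) t, (1:ℝ≥0∞) :=
          lintegral_add_right' _ aemeasurable_const
      _ < ⊤ := by
          rw [setLIntegral_one, Real.volume_Icc]
          exact ENNReal.add_lt_top.2 ⟨hPhi t ht, ENNReal.ofReal_lt_top⟩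
  have hdisa := hdis (θ/3 + 2*γ/3) a (by linarith) (fun τ => self_le_add_right _ _)
  have hdisb := hdis ((θ+1)/3 + 2*γ/3) b (by linarith) (fun τ => le_add_self)
  -- the main energy identity
  have main : ∀ t ∈ Ici (0:ℝ),
      esum lam γ (fun j => a j t) + esum lam γ (fun j => b j t)
        + (∫⁻ τ in Icc (0:ℝ) t,
            (ENNReal.ofReal (2 * ν) * esum lam (γ + 1) (fun j => a j τ)
              + ENNReal.ofReal (2 * μ) * esum lam (γ + 1) (fun j => b j τ)))
      = esum lam γ (fun j => a j 0) + esum lam γ (fun j => b j 0)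
        + ENNReal.ofReal (2 * (lam ^ (2 * γ) - 1))
            * (∫⁻ τ in Icc (0:ℝ) t, eflux lam (2 * γ + θ) a a τ)
        + ENNReal.ofReal (2 * di * (lam ^ (2 * γ) - 1))
            * (∫⁻ τ in Icc (0:ℝ) t, eflux lam (2 * γ + θ + 1) b b τ)
        + ENNReal.ofReal (2 * (lam ^ (2 * γ) - 1))
            * (∫⁻ τ in Icc (0:ℝ) t, eflux lam (2 * γ + θ) b a τ) := by
    intro t ht
    have ht' : (0:ℝ) ≤ t := ht
    have hIcc : Icc (0:ℝ) t ⊆ Ici 0 := fun x hx => hx.1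
    have hIoc : Ioc (0:ℝ) t ⊆ Ici 0 := fun x hx => le_of_lt hx.1
    have hStnn : ∀ (e : ℝ) (u v : ℕ → ℝ → ℝ),
        (∀ (k : ℕ) (τ : ℝ), τ ∈ Ici (0:ℝ) → 0 ≤ v k τ) →
        ∀ (k : ℕ) (τ : ℝ), τ ∈ Ici (0:ℝ) → 0 ≤ St lam γ e u v k τ := by
      intro e u v hv k τ hτ
      exact mul_nonneg (mul_nonneg (mul_nonneg (Real.rpow_nonneg hl0.le _)
        (Real.rpow_nonneg hl0.le _)) (sq_nonneg _)) (hv _ _ hτ)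
    have hEEnn : ∀ (N : ℕ) (τ : ℝ), 0 ≤ EE lam γ a b N τ := fun N τ =>
      Finset.sum_nonneg fun j _ => mul_nonneg (Real.rpow_nonneg hl0.le _)
        (add_nonneg (sq_nonneg _) (sq_nonneg _))
    have hDDnn : ∀ (N : ℕ) (τ : ℝ), 0 ≤ DD lam γ ν μ a b N τ := fun N τ =>
      Finset.sum_nonneg fun j _ => add_nonneg
        (mul_nonneg (mul_nonneg (by linarith)
          (mul_nonneg (Real.rpow_nonneg hl0.le _) (Real.rpow_nonneg hl0.le _))) (sq_nonneg _))
        (mul_nonneg (mul_nonneg (by linarith)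
          (mul_nonneg (Real.rpow_nonneg hl0.le _) (Real.rpow_nonneg hl0.le _))) (sq_nonneg _))
    have hBBnn : ∀ (N : ℕ) (τ : ℝ), τ ∈ Ici (0:ℝ) → 0 ≤ BB lam γ θ di a b N τ := by
      intro N τ hτ
      have h1 := hStnn θ a a hann N τ hτ
      have h2 := hStnn θ b a hann N τ hτ
      have h3 := hStnn (θ+1) b b hbnn N τ hτ
      have h4 := mul_nonneg hdi.le h3
      rw [BB]; linarith
    have hFFnn : ∀ (M : ℕ) (τ : ℝ), τ ∈ Ici (0:ℝ) → 0 ≤ FF lam γ θ di a b M τ := by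
      intro M τ hτ
      refine mul_nonneg hclam (Finset.sum_nonneg fun j _ => ?_)
      have h1 := hStnn θ a a hann (j+1) τ hτ
      have h2 := hStnn θ b a hann (j+1) τ hτ
      have h3 := hStnn (θ+1) b b hbnn (j+1) τ hτ
      have h4 := mul_nonneg hdi.le h3
      linarith
    have hIocIcc : volume.restrict (Ioc (0:ℝ) t) = volume.restrict (Icc (0:ℝ) t) :=
      Measure.restrict_congr_set Ioc_ae_eq_Icc
    have hperN : ∀ N : ℕ,
        ENNReal.ofReal (EE lam γ a b N t)
          + (∫⁻ τ in Icc (0:ℝ) t, ENNReal.ofReal (DD lam γ ν μ a b N τ))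
          + (∫⁻ τ in Icc (0:ℝ) t, ENNReal.ofReal (BB lam γ θ di a b N τ))
        = ENNReal.ofReal (EE lam γ a b N 0)
          + ∫⁻ τ in Icc (0:ℝ) t, ENNReal.ofReal (FF lam γ θ di a b (N-1) τ) := by
      intro N
      have hreal := energy_N (γ := γ) hsol hl0 ht' N
      have iD : IntegrableOn (DD lam γ ν μ a b N) (Ioc 0 t) volume :=
        (((contDD hsol N).mono hIcc).integrableOn_Icc).mono_set Ioc_subset_Icc_self
      have iB : IntegrableOn (BB lam γ θ di a b N) (Ioc 0 t) volume :=
        (((contBB hsol N).mono hIcc).integrableOn_Icc).mono_set Ioc_subset_Icc_self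
      have iF : IntegrableOn (FF lam γ θ di a b (N-1)) (Ioc 0 t) volume :=
        (((contFF hsol (N-1)).mono hIcc).integrableOn_Icc).mono_set Ioc_subset_Icc_self
      have nD : (0:ℝ) ≤ ∫ τ in Ioc (0:ℝ) t, DD lam γ ν μ a b N τ :=
        setIntegral_nonneg measurableSet_Ioc fun τ _ => hDDnn N τ
      have nB : (0:ℝ) ≤ ∫ τ in Ioc (0:ℝ) t, BB lam γ θ di a b N τ :=
        setIntegral_nonneg measurableSet_Ioc fun τ hτ => hBBnn N τ (hIoc hτ)
      have nF : (0:ℝ) ≤ ∫ τ in Ioc (0:ℝ) t, FF lam γ θ di a b (N-1) τ :=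
        setIntegral_nonneg measurableSet_Ioc fun τ hτ => hFFnn (N-1) τ (hIoc hτ)
      have e1 : ENNReal.ofReal (∫ τ in Ioc (0:ℝ) t, DD lam γ ν μ a b N τ)
          = ∫⁻ τ in Icc (0:ℝ) t, ENNReal.ofReal (DD lam γ ν μ a b N τ) := by
        rw [ofReal_integral_eq_lintegral_ofReal iD (ae_of_all _ (hDDnn N)), hIocIcc]
      have e2 : ENNReal.ofReal (∫ τ in Ioc (0:ℝ) t, BB lam γ θ di a b N τ)
          = ∫⁻ τ in Icc (0:ℝ) t, ENNReal.ofReal (BB lam γ θ di a b N τ) := by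
        rw [ofReal_integral_eq_lintegral_ofReal iB
          ((ae_restrict_iff' measurableSet_Ioc).2 (ae_of_all _ fun τ hτ => hBBnn N τ (hIoc hτ))),
          hIocIcc]
      have e3 : ENNReal.ofReal (∫ τ in Ioc (0:ℝ) t, FF lam γ θ di a b (N-1) τ)
          = ∫⁻ τ in Icc (0:ℝ) t, ENNReal.ofReal (FF lam γ θ di a b (N-1) τ) := by
        rw [ofReal_integral_eq_lintegral_ofReal iF
          ((ae_restrict_iff' measurableSet_Ioc).2
            (ae_of_all _ fun τ hτ => hFFnn (N-1) τ (hIoc hτ))),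
          hIocIcc]
      have h := congrArg ENNReal.ofReal hreal
      rw [ENNReal.ofReal_add (hEEnn N t) (add_nonneg nD nB),
        ENNReal.ofReal_add nD nB,
        ENNReal.ofReal_add (hEEnn N 0) nF, e1, e2, e3, ← add_assoc] at h
      exact h
    have hEt := tendEE lam γ hl0 a b t
    have hE0 := tendEE lam γ hl0 a b 0
    have hDt := tendDD (γ := γ) hsol hlam hν hμ t
    have hFt := tendFF (γ := γ) hsol hlam (by linarith) hdi hann hbnn t
    have hBt := tendBB (γ := γ) hsol hlam hdi hann hbnn t
      (hfaa t ht').ne (hfba t ht').ne (hfbb t ht').ne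
    have hLt := (hEt.add hDt).add hBt
    have hRt := hE0.add hFt
    have heq := tendsto_nhds_unique (hLt.congr fun N => hperN N) hRt
    rw [add_zero] at heq
    rw [heq]
    ring
  refine ⟨fun T hT => ⟨hdisa T hT.le, hdisb T hT.le, hfaa T hT.le, hfba T hT.le, hfbb T hT.le⟩,
    ?_, main⟩
  intro t ht
  have h := main t ht
  calc esum lam γ (fun j => a j t) + esum lam γ (fun j => b j t)
      ≤ esum lam γ (fun j => a j t) + esum lam γ (fun j => b j t)
        + (∫⁻ τ in Icc (0:ℝ) t,
            (ENNReal.ofReal (2 * ν) * esum lam (γ + 1) (fun j => a j τ)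
              + ENNReal.ofReal (2 * μ) * esum lam (γ + 1) (fun j => b j τ))) :=
        self_le_add_right _ _
    _ = _ := h
    _ < ⊤ := by
        refine ENNReal.add_lt_top.2 ⟨ENNReal.add_lt_top.2 ⟨ENNReal.add_lt_top.2
          ⟨hinit, ENNReal.mul_lt_top ENNReal.ofReal_lt_top (hfaa t ht)⟩,
            ENNReal.mul_lt_top ENNReal.ofReal_lt_top (hfbb t ht)⟩,
          ENNReal.mul_lt_top ENNReal.ofReal_lt_top (hfba t ht)⟩
end
end
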